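/- arXiv:2110.03376 — 9 statements merged into one kernel-verified Lean document; each statement's English description precedes it below -/
import Mathlib

section
/- Let H : ℝ² × ℝ² → ℝ be C¹ and let g : ℝ² → ℝ be C¹ with g(q) > 0 for all q. Let (q,p) : I → ℝ² × ℝ² be a C¹ solution of Hamilton's equations for Ĥ(q,p) := g(q)·H(q,p), i.e. q'(t) = g(q(t))·∇_p H(q(t),p(t)) and p'(t) = −g(q(t))·∇_q H(q(t),p(t)) − H(q(t),p(t))·∇g(q(t)) for all t ∈ I, and suppose H(q(t₀),p(t₀)) = 0 for some t₀ ∈ I. Then H(q(t),p(t)) = 0 for all t ∈ I; moreover, setting τ(t) := ∫_{t₀}^t g(q(u)) du and letting σ be the inverse of the strictly increasing function τ, the reparametrized curve s ↦ (q(σ(s)), p(σ(s))) solves Hamilton's equations for H: (q∘σ)'(s) = ∇_p H(q(σ(s)),p(σ(s))) and (p∘σ)'(s) = −∇_q H(q(σ(s)),p(σ(s))). -/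
/-- Gradient of a function on ℝ² (componentwise partial derivatives). -/
noncomputable def grad2 (F : ℝ × ℝ → ℝ) (x : ℝ × ℝ) : ℝ × ℝ :=
  (deriv (fun u => F (u, x.2)) x.1, deriv (fun u => F (x.1, u)) x.2)

/-- Gradient in the `q`-variables of a Hamiltonian on ℝ² × ℝ². -/
noncomputable def gradQ (H : (ℝ × ℝ) × (ℝ × ℝ) → ℝ) (x : (ℝ × ℝ) × (ℝ × ℝ)) : ℝ × ℝ :=
  grad2 (fun q => H (q, x.2)) x.1

/-- Gradient in the `p`-variables of a Hamiltonian on ℝ² × ℝ². -/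
noncomputable def gradP (H : (ℝ × ℝ) × (ℝ × ℝ) → ℝ) (x : (ℝ × ℝ) × (ℝ × ℝ)) : ℝ × ℝ :=
  grad2 (fun p => H (x.1, p)) x.2

lemma grad2_eq_fderiv {g : ℝ × ℝ → ℝ} (hg : ContDiff ℝ 1 g) (x : ℝ × ℝ) :
    grad2 g x = (fderiv ℝ g x (1, 0), fderiv ℝ g x (0, 1)) := by
  have hd := (hg.differentiable one_ne_zero x).hasFDerivAt
  have h1 : HasDerivAt (fun u : ℝ => (u, x.2)) ((1 : ℝ), (0 : ℝ)) x.1 :=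
    (hasDerivAt_id x.1).prodMk (hasDerivAt_const _ _)
  have h2 : HasDerivAt (fun u : ℝ => (x.1, u)) ((0 : ℝ), (1 : ℝ)) x.2 :=
    (hasDerivAt_const _ _).prodMk (hasDerivAt_id x.2)
  have e1 : HasDerivAt (fun u => g (u, x.2)) (fderiv ℝ g x (1, 0)) x.1 :=
    hd.comp_hasDerivAt x.1 h1
  have e2 : HasDerivAt (fun u => g (x.1, u)) (fderiv ℝ g x (0, 1)) x.2 :=
    hd.comp_hasDerivAt x.2 h2
  simp [grad2, e1.deriv, e2.deriv]

section HGrad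
variable {H : (ℝ × ℝ) × (ℝ × ℝ) → ℝ}

lemma gradQ_eq_fderiv (hH : ContDiff ℝ 1 H) (x : (ℝ × ℝ) × (ℝ × ℝ)) :
    gradQ H x = (fderiv ℝ H x ((1, 0), (0, 0)), fderiv ℝ H x ((0, 1), (0, 0))) := by
  have hd := (hH.differentiable one_ne_zero x).hasFDerivAt
  have h1 : HasDerivAt (fun u : ℝ => ((u, x.1.2), x.2)) (((1 : ℝ), (0 : ℝ)), ((0 : ℝ), (0 : ℝ))) x.1.1 :=
    ((hasDerivAt_id x.1.1).prodMk (hasDerivAt_const _ _)).prodMk (hasDerivAt_const _ _)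
  have h2 : HasDerivAt (fun u : ℝ => ((x.1.1, u), x.2)) (((0 : ℝ), (1 : ℝ)), ((0 : ℝ), (0 : ℝ))) x.1.2 :=
    ((hasDerivAt_const _ _).prodMk (hasDerivAt_id x.1.2)).prodMk (hasDerivAt_const _ _)
  have e1 := hd.comp_hasDerivAt x.1.1 h1
  have e2 := hd.comp_hasDerivAt x.1.2 h2
  simp only [Function.comp_def] at e1 e2
  simp [gradQ, grad2, e1.deriv, e2.deriv]

lemma gradP_eq_fderiv (hH : ContDiff ℝ 1 H) (x : (ℝ × ℝ) × (ℝ × ℝ)) :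
    gradP H x = (fderiv ℝ H x ((0, 0), (1, 0)), fderiv ℝ H x ((0, 0), (0, 1))) := by
  have hd := (hH.differentiable one_ne_zero x).hasFDerivAt
  have h1 : HasDerivAt (fun u : ℝ => (x.1, (u, x.2.2))) (((0 : ℝ), (0 : ℝ)), ((1 : ℝ), (0 : ℝ))) x.2.1 :=
    (hasDerivAt_const _ _).prodMk ((hasDerivAt_id x.2.1).prodMk (hasDerivAt_const _ _))
  have h2 : HasDerivAt (fun u : ℝ => (x.1, (x.2.1, u))) (((0 : ℝ), (0 : ℝ)), ((0 : ℝ), (1 : ℝ))) x.2.2 :=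
    (hasDerivAt_const _ _).prodMk ((hasDerivAt_const _ _).prodMk (hasDerivAt_id x.2.2))
  have e1 := hd.comp_hasDerivAt x.2.1 h1
  have e2 := hd.comp_hasDerivAt x.2.2 h2
  simp only [Function.comp_def] at e1 e2
  simp [gradP, grad2, e1.deriv, e2.deriv]

lemma clm_expand (L : ((ℝ × ℝ) × (ℝ × ℝ)) →L[ℝ] ℝ) (v : (ℝ × ℝ) × (ℝ × ℝ)) :
    L v = v.1.1 * L ((1, 0), (0, 0)) + v.1.2 * L ((0, 1), (0, 0))
        + v.2.1 * L ((0, 0), (1, 0)) + v.2.2 * L ((0, 0), (0, 1)) := by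
  have hv : v = v.1.1 • (((1 : ℝ), (0 : ℝ)), ((0 : ℝ), (0 : ℝ)))
      + v.1.2 • (((0 : ℝ), (1 : ℝ)), ((0 : ℝ), (0 : ℝ)))
      + v.2.1 • (((0 : ℝ), (0 : ℝ)), ((1 : ℝ), (0 : ℝ)))
      + v.2.2 • (((0 : ℝ), (0 : ℝ)), ((0 : ℝ), (1 : ℝ))) := by
    ext <;> simp
  conv_lhs => rw [hv]
  simp only [map_add, map_smul, smul_eq_mul]

end HGrad

lemma grad2_continuous {g : ℝ × ℝ → ℝ} (hg : ContDiff ℝ 1 g) : Continuous (grad2 g) := by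
  have : grad2 g = fun x => (fderiv ℝ g x (1, 0), fderiv ℝ g x (0, 1)) :=
    funext fun x => grad2_eq_fderiv hg x
  rw [this]
  exact ((hg.continuous_fderiv one_ne_zero).clm_apply continuous_const).prodMk
    ((hg.continuous_fderiv one_ne_zero).clm_apply continuous_const)

lemma gradP_continuous {H : (ℝ × ℝ) × (ℝ × ℝ) → ℝ} (hH : ContDiff ℝ 1 H) :
    Continuous (gradP H) := by
  have : gradP H = fun x => (fderiv ℝ H x ((0, 0), (1, 0)), fderiv ℝ H x ((0, 0), (0, 1))) :=
    funext fun x => gradP_eq_fderiv hH x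
  rw [this]
  exact ((hH.continuous_fderiv one_ne_zero).clm_apply continuous_const).prodMk
    ((hH.continuous_fderiv one_ne_zero).clm_apply continuous_const)

/-- If `E` solves the linear ODE `E' = c·E` on `[a,b]` with `E a = 0`, then `E ≡ 0`. -/
lemma zero_of_linear_ode {E c : ℝ → ℝ} {a b : ℝ}
    (hc : ContinuousOn c (Set.Icc a b))
    (hE : ∀ x ∈ Set.Icc a b, HasDerivWithinAt E (c x * E x) (Set.Icc a b) x)
    (ha : E a = 0) : ∀ x ∈ Set.Icc a b, E x = 0 := by
  obtain ⟨K, hK⟩ := (isCompact_Icc (a := a) (b := b)).exists_bound_of_continuousOn hc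
  have hEc : ContinuousOn E (Set.Icc a b) := fun x hx => (hE x hx).continuousWithinAt
  intro x hx
  have key := norm_le_gronwallBound_of_norm_deriv_right_le (δ := 0) (K := K) (ε := 0)
    (f := E) (f' := fun x => c x * E x) hEc ?_ (by simp [ha]) ?_ x hx
  · have : ‖E x‖ ≤ 0 := by simpa [gronwallBound_ε0_δ0] using key
    simpa using le_antisymm this (norm_nonneg _)
  · intro y hy
    refine (hE y ⟨hy.1, hy.2.le⟩).mono_of_mem_nhdsWithin ?_
    rw [mem_nhdsWithin]
    exact ⟨Set.Iio b, isOpen_Iio, hy.2, fun z hz => ⟨le_trans hy.1 hz.2, le_of_lt hz.1⟩⟩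
  · intro y hy
    have : ‖c y * E y‖ ≤ K * ‖E y‖ := by
      rw [norm_mul]
      exact mul_le_mul_of_nonneg_right (hK y ⟨hy.1, hy.2.le⟩) (norm_nonneg _)
    simpa using this

open Set intervalIntegral in
/-- FTC: derivative of `t ↦ ∫_{t₀}^t f` within a convex set on which `f` is continuous. -/
lemma integral_hasDerivWithinAt_convex {f : ℝ → ℝ} {I : Set ℝ} (hI : Convex ℝ I)
    {t₀ : ℝ} (ht₀ : t₀ ∈ I) (hf : ContinuousOn f I) {t : ℝ} (ht : t ∈ I) :
    HasDerivWithinAt (fun t => ∫ u in t₀..t, f u) (f t) I t := by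
  have hsub : ∀ a ∈ I, ∀ b ∈ I, uIcc a b ⊆ I := fun a ha b hb =>
    hI.ordConnected.uIcc_subset ha hb
  have hint : ∀ a ∈ I, ∀ b ∈ I, IntervalIntegrable f MeasureTheory.volume a b := fun a ha b hb =>
    (hf.mono (hsub a ha b hb)).intervalIntegrable
  rw [hasDerivWithinAt_iff_tendsto_slope, Metric.tendsto_nhdsWithin_nhds]
  intro ε hε
  obtain ⟨δ, hδ, hδ'⟩ := Metric.continuousWithinAt_iff.1 (hf t ht) (ε / 2) (by positivity)
  refine ⟨δ, hδ, ?_⟩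
  rintro t' ⟨ht', hne⟩ hdist
  have hnet : t' ≠ t := by simpa using hne
  have hne' : t' - t ≠ 0 := sub_ne_zero.2 hnet
  have hsplit : (∫ u in t₀..t', f u) - (∫ u in t₀..t, f u) = ∫ u in t..t', f u := by
    have := integral_add_adjacent_intervals (hint t₀ ht₀ t ht) (hint t ht t' ht')
    linarith
  have hconst : ∫ u in t..t', (f u - f t) =
      ((∫ u in t₀..t', f u) - (∫ u in t₀..t, f u)) - (t' - t) * f t := by
    rw [intervalIntegral.integral_sub (hint t ht t' ht') intervalIntegrable_const,
      intervalIntegral.integral_const, hsplit]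
    simp [smul_eq_mul]
  have hest : |∫ u in t..t', f u - f t| ≤ ε / 2 * |t' - t| := by
    have hb : ∀ u ∈ Set.uIoc t t', ‖f u - f t‖ ≤ ε / 2 := by
      intro u hu
      have huIcc : u ∈ uIcc t t' := uIoc_subset_uIcc hu
      have huI : u ∈ I := hsub t ht t' ht' huIcc
      have hud : dist u t < δ := lt_of_le_of_lt
        (Real.dist_le_of_mem_uIcc huIcc left_mem_uIcc) (by rwa [dist_comm] at hdist)
      have := hδ' huI hud
      rw [Real.dist_eq] at this
      exact le_of_lt (by simpa [Real.norm_eq_abs] using this)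
    simpa [Real.norm_eq_abs] using
      intervalIntegral.norm_integral_le_of_norm_le_const (C := ε / 2) hb
  have hslope : slope (fun t => ∫ u in t₀..t, f u) t t' - f t
      = (∫ u in t..t', (f u - f t)) / (t' - t) := by
    rw [slope_def_field, hconst]
    field_simp
  rw [Real.dist_eq, hslope, abs_div]
  calc |∫ u in t..t', f u - f t| / |t' - t| ≤ (ε / 2 * |t' - t|) / |t' - t| := by
        gcongr
    _ = ε / 2 := mul_div_cancel_right₀ _ (abs_ne_zero.2 hne')
    _ < ε := by linarith

open Set in
/-- Multiplying a Hamiltonian `H` by a positive function `g(q)` of the positions only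
reparametrizes the flow on the zero-energy hypersurface: a solution of Hamilton's
equations for `Ĥ = g·H` starting with `H = 0` stays on `{H = 0}`, and after the time
change `τ(t) = ∫_{t₀}^t g(q(u)) du`, with inverse `σ`, it solves Hamilton's equations
for `H`. -/
theorem stmt_1 (H : (ℝ × ℝ) × (ℝ × ℝ) → ℝ) (g : ℝ × ℝ → ℝ)
    (hH : ContDiff ℝ 1 H) (hgC : ContDiff ℝ 1 g) (hgpos : ∀ x, 0 < g x)
    (I : Set ℝ) (hI : Convex ℝ I) (t₀ : ℝ) (ht₀ : t₀ ∈ I)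
    (q p : ℝ → ℝ × ℝ)
    (hq : ∀ t ∈ I, HasDerivWithinAt q (g (q t) • gradP H (q t, p t)) I t)
    (hp : ∀ t ∈ I, HasDerivWithinAt p
      ((-g (q t)) • gradQ H (q t, p t) - H (q t, p t) • grad2 g (q t)) I t)
    (hE : H (q t₀, p t₀) = 0)
    (τ : ℝ → ℝ) (hτ : τ = fun t => ∫ u in t₀..t, g (q u))
    (σ : ℝ → ℝ) (hσ : ∀ t ∈ I, σ (τ t) = t) :
    (∀ t ∈ I, H (q t, p t) = 0) ∧
    (∀ t ∈ I,
      HasDerivWithinAt (fun s => q (σ s)) (gradP H (q t, p t)) (τ '' I) (τ t) ∧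
      HasDerivWithinAt (fun s => p (σ s)) (-gradQ H (q t, p t)) (τ '' I) (τ t)) := by
  set E : ℝ → ℝ := fun t => H (q t, p t) with hEdef
  set c : ℝ → ℝ := fun t => -((grad2 g (q t)).1 * (gradP H (q t, p t)).1
      + (grad2 g (q t)).2 * (gradP H (q t, p t)).2) with hcdef
  have hqc : ContinuousOn q I := fun t ht => (hq t ht).continuousWithinAt
  have hpc : ContinuousOn p I := fun t ht => (hp t ht).continuousWithinAt
  -- derivative of the energy
  have hE' : ∀ t ∈ I, HasDerivWithinAt E (c t * E t) I t := by
    intro t ht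
    have hx : HasDerivWithinAt (fun t => (q t, p t))
        (g (q t) • gradP H (q t, p t),
          (-g (q t)) • gradQ H (q t, p t) - H (q t, p t) • grad2 g (q t)) I t :=
      (hq t ht).prodMk (hp t ht)
    have hL : HasFDerivAt H (fderiv ℝ H (q t, p t)) (q t, p t) :=
      (hH.differentiable one_ne_zero _).hasFDerivAt
    have hcomp := hL.comp_hasDerivWithinAt t hx
    have hv : fderiv ℝ H (q t, p t) (g (q t) • gradP H (q t, p t),
        (-g (q t)) • gradQ H (q t, p t) - H (q t, p t) • grad2 g (q t)) = c t * E t := by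
      rw [clm_expand, gradP_eq_fderiv hH (q t, p t), gradQ_eq_fderiv hH (q t, p t)]
      simp only [hcdef, hEdef, gradP_eq_fderiv hH (q t, p t), gradQ_eq_fderiv hH (q t, p t),
        Prod.fst_sub, Prod.snd_sub, Prod.smul_fst, Prod.smul_snd, smul_eq_mul]
      ring
    rw [hv] at hcomp
    exact hcomp
  have hcC : ContinuousOn c I := by
    have h1 : ContinuousOn (fun t => grad2 g (q t)) I :=
      (grad2_continuous hgC).comp_continuousOn hqc
    have h2 : ContinuousOn (fun t => gradP H (q t, p t)) I :=
      (gradP_continuous hH).comp_continuousOn (hqc.prodMk hpc)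
    exact (((continuous_fst.comp_continuousOn h1).mul
      (continuous_fst.comp_continuousOn h2)).add
      ((continuous_snd.comp_continuousOn h1).mul
      (continuous_snd.comp_continuousOn h2))).neg
  -- Part 1 : the energy vanishes identically
  have hE0 : ∀ t ∈ I, E t = 0 := by
    intro t₁ ht₁
    rcases le_total t₀ t₁ with hle | hle
    · have hIcc : Icc t₀ t₁ ⊆ I := hI.ordConnected.out ht₀ ht₁
      exact zero_of_linear_ode (hcC.mono hIcc)
        (fun x hx => (hE' x (hIcc hx)).mono hIcc) hE t₁ ⟨hle, le_rfl⟩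
    · have hIcc : Icc t₁ t₀ ⊆ I := hI.ordConnected.out ht₁ ht₀
      have hφ : ∀ z ∈ Icc t₁ t₀, t₀ + t₁ - z ∈ Icc t₁ t₀ := by
        rintro z ⟨h1, h2⟩; exact ⟨by linarith, by linarith⟩
      have key : ∀ x ∈ Icc t₁ t₀, E (t₀ + t₁ - x) = 0 := by
        refine zero_of_linear_ode (c := fun s => -(c (t₀ + t₁ - s))) ?_ ?_ (by simpa using hE)
        · refine ContinuousOn.neg ((hcC.mono hIcc).comp ?_ hφ)
          exact (continuous_const.sub continuous_id).continuousOn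
        · intro x hx
          have hd : HasDerivWithinAt (fun s => t₀ + t₁ - s) (-1 : ℝ) (Icc t₁ t₀) x :=
            ((hasDerivAt_id x).const_sub (t₀ + t₁)).hasDerivWithinAt
          have hEd : HasDerivWithinAt E
              (c (t₀ + t₁ - x) * E (t₀ + t₁ - x)) (Icc t₁ t₀) (t₀ + t₁ - x) :=
            (hE' _ (hIcc (hφ x hx))).mono hIcc
          have := hEd.comp x hd hφ
          exact this.congr_deriv (by beta_reduce; ring)
      have := key t₀ ⟨hle, le_rfl⟩
      simpa using this
  refine ⟨hE0, ?_⟩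
  intro t ht
  have hft : 0 < g (q t) := hgpos _
  set f : ℝ → ℝ := fun u => g (q u) with hfdef
  have hfc : ContinuousOn f I := hgC.continuous.comp_continuousOn hqc
  have hint : ∀ a ∈ I, ∀ b ∈ I, IntervalIntegrable f MeasureTheory.volume a b := fun a ha b hb =>
    (hfc.mono (hI.ordConnected.uIcc_subset ha hb)).intervalIntegrable
  have hτd : ∀ s ∈ I, HasDerivWithinAt τ (f s) I s := by
    intro s hs; rw [hτ]; exact integral_hasDerivWithinAt_convex hI ht₀ hfc hs
  have hτsub : ∀ a ∈ I, ∀ b ∈ I, τ b - τ a = ∫ u in a..b, f u := by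
    intro a ha b hb
    have := intervalIntegral.integral_add_adjacent_intervals
      (hint t₀ ht₀ a ha) (hint a ha b hb)
    rw [hτ]; dsimp only; linarith
  set m : ℝ := g (q t) / 2 with hm
  have hmpos : 0 < m := by positivity
  obtain ⟨δ, hδpos, hδ⟩ := Metric.continuousWithinAt_iff.1 (hfc t ht) m hmpos
  have hmf : ∀ u ∈ I, dist u t < δ → m ≤ f u := by
    intro u hu hd
    have := hδ hu hd
    rw [Real.dist_eq, abs_lt] at this
    have hft' : f t = g (q t) := rfl
    rw [hm]; linarith [this.1]
  -- quantitative injectivity of τ near t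
  have hlow : ∀ ε > 0, ∃ η > 0, ∀ t' ∈ I, |τ t' - τ t| < η → |t' - t| < ε := by
    intro ε hε
    set r : ℝ := min ε δ with hr
    have hrpos : 0 < r := lt_min hε hδpos
    have hrδ : r ≤ δ := min_le_right _ _
    refine ⟨m * (r / 2), by positivity, ?_⟩
    intro t' ht' hτη
    by_contra hcon
    push_neg at hcon
    have hrle : r ≤ |t' - t| := le_trans (min_le_left _ _) hcon
    have hfnn : ∀ u, 0 ≤ f u := fun u => (hgpos _).le
    rcases le_total t t' with hc | hc
    · have h1 : t + r ≤ t' := by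
        rw [abs_of_nonneg (by linarith)] at hrle; linarith
      have hmid : t + r / 2 ∈ I :=
        hI.ordConnected.out ht ht' ⟨by linarith, by linarith⟩
      have hstep1 : m * (r / 2) ≤ ∫ u in t..t + r / 2, f u := by
        have hmono := intervalIntegral.integral_mono_on (by linarith : t ≤ t + r / 2)
          (intervalIntegrable_const (c := m)) (hint t ht _ hmid) ?_
        · rw [intervalIntegral.integral_const, smul_eq_mul] at hmono
          calc m * (r / 2) = (t + r / 2 - t) * m := by ring
            _ ≤ _ := hmono
        · intro u hu
          refine hmf u (hI.ordConnected.out ht ht' ⟨hu.1, by linarith [hu.2]⟩) ?_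
          rw [Real.dist_eq, abs_of_nonneg (by linarith [hu.1])]
          linarith [hu.2]
      have hstep2 : 0 ≤ ∫ u in (t + r / 2)..t', f u :=
        intervalIntegral.integral_nonneg (by linarith) (fun u _ => hfnn u)
      have hadd := intervalIntegral.integral_add_adjacent_intervals
        (hint t ht _ hmid) (hint _ hmid t' ht')
      have hτge : m * (r / 2) ≤ τ t' - τ t := by
        rw [hτsub t ht t' ht', ← hadd]; linarith
      have := le_trans hτge (le_abs_self _)
      linarith
    · have h1 : t' ≤ t - r := by
        rw [abs_of_nonpos (by linarith)] at hrle; linarith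
      have hmid : t - r / 2 ∈ I :=
        hI.ordConnected.out ht' ht ⟨by linarith, by linarith⟩
      have hstep1 : m * (r / 2) ≤ ∫ u in (t - r / 2)..t, f u := by
        have hmono := intervalIntegral.integral_mono_on (by linarith : t - r / 2 ≤ t)
          (intervalIntegrable_const (c := m)) (hint _ hmid t ht) ?_
        · rw [intervalIntegral.integral_const, smul_eq_mul] at hmono
          calc m * (r / 2) = (t - (t - r / 2)) * m := by ring
            _ ≤ _ := hmono
        · intro u hu
          refine hmf u (hI.ordConnected.out ht' ht ⟨by linarith [hu.1], hu.2⟩) ?_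
          rw [Real.dist_eq, abs_of_nonpos (by linarith [hu.2])]
          linarith [hu.1]
      have hstep2 : 0 ≤ ∫ u in t'..(t - r / 2), f u :=
        intervalIntegral.integral_nonneg (by linarith) (fun u _ => hfnn u)
      have hadd := intervalIntegral.integral_add_adjacent_intervals
        (hint t' ht' _ hmid) (hint _ hmid t ht)
      have hτge : m * (r / 2) ≤ τ t - τ t' := by
        rw [hτsub t' ht' t ht, ← hadd]; linarith
      have h2 : m * (r / 2) ≤ |τ t' - τ t| :=
        le_trans (by linarith : m * (r / 2) ≤ -(τ t' - τ t)) (neg_le_abs _)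
      linarith
  -- continuity of σ at τ t within τ '' I
  have hσcont : Filter.Tendsto σ (nhdsWithin (τ t) (τ '' I)) (nhds t) := by
    rw [Metric.tendsto_nhdsWithin_nhds]
    intro ε hε
    obtain ⟨η, hη, hkey⟩ := hlow ε hε
    refine ⟨η, hη, ?_⟩
    rintro s ⟨t', ht', rfl⟩ hd
    rw [hσ t' ht', Real.dist_eq]
    exact hkey t' ht' (by rwa [Real.dist_eq] at hd)
  have hmem : ∀ s ∈ τ '' I \ {τ t}, σ s ∈ I \ {t} ∧
      slope σ (τ t) s = (slope τ t (σ s))⁻¹ := by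
    rintro s ⟨⟨t', ht', rfl⟩, hs⟩
    have hσt' := hσ t' ht'
    have hne : t' ≠ t := by
      rintro rfl; exact hs rfl
    refine ⟨by rw [hσt']; exact ⟨ht', hne⟩, ?_⟩
    rw [slope_def_field, slope_def_field, hσ t ht, hσt', inv_div]
  have hσd : HasDerivWithinAt σ (g (q t))⁻¹ (τ '' I) (τ t) := by
    rw [hasDerivWithinAt_iff_tendsto_slope]
    have h1 : Filter.Tendsto σ (nhdsWithin (τ t) (τ '' I \ {τ t})) (nhdsWithin t (I \ {t})) := by
      rw [tendsto_nhdsWithin_iff]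
      exact ⟨hσcont.mono_left (nhdsWithin_mono _ diff_subset),
        eventually_mem_nhdsWithin.mono fun s hs => (hmem s hs).1⟩
    have h2 : Filter.Tendsto (slope τ t) (nhdsWithin t (I \ {t})) (nhds (f t)) :=
      hasDerivWithinAt_iff_tendsto_slope.1 (hτd t ht)
    have h3 : Filter.Tendsto (fun y : ℝ => y⁻¹) (nhds (f t)) (nhds (f t)⁻¹) :=
      (continuousAt_inv₀ (ne_of_gt hft)).tendsto
    refine ((h3.comp (h2.comp h1)).congr' ?_)
    exact eventually_mem_nhdsWithin.mono fun s hs => ((hmem s hs).2).symm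
  have hmaps : MapsTo σ (τ '' I) I := by
    rintro s ⟨t', ht', rfl⟩
    rw [hσ t' ht']; exact ht'
  constructor
  · have hcomp := HasDerivWithinAt.scomp_of_eq (τ t) (hq t ht) hσd hmaps (hσ t ht).symm
    rw [smul_smul, inv_mul_cancel₀ hft.ne', one_smul] at hcomp
    exact hcomp
  · have h0 : H (q t, p t) = 0 := hE0 t ht
    have hp' : HasDerivWithinAt p ((-g (q t)) • gradQ H (q t, p t)) I t := by
      have := hp t ht
      rw [h0] at this
      simpa using this
    have hcomp := HasDerivWithinAt.scomp_of_eq (τ t) hp' hσd hmaps (hσ t ht).symm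
    rw [smul_smul] at hcomp
    have : (g (q t))⁻¹ * (-g (q t)) = -1 := by field_simp
    rw [this, neg_one_smul] at hcomp
    exact hcomp
end

section
/- Let k ≥ 2 be an integer and f, s ∈ ℝ. Let (z,w) : I → (ℂ\{0}) × ℂ be a C¹ solution of z'(t) = w(t), w'(t) = −2(k−1)·f·|z(t)|^{2k−4}·z(t) (Hamilton's equations for Ĥ(z,w) = |w|²/2 + f|z|^{2k−2} + s), and suppose |w(t₀)|²/2 + f|z(t₀)|^{2k−2} + s = 0 for some t₀ ∈ I. Then this energy relation holds for all t ∈ I; moreover, setting τ(t) := k·∫_{t₀}^t |z(u)|^{2k−2} du with inverse function σ, the curves q(s) := z(σ(s))^k and p(s) := w(σ(s))/conj(z(σ(s)))^{k−1} satisfy q'(s) = p(s), p'(s) = (2−2/k)·s·q(s)/|q(s)|^{4−2/k}, and |p(s)|²/2 + s/|q(s)|^{2−2/k} + f = 0 for all s. In other words, the k-th power conformal map transforms the zero-energy flow of the Hamiltonian |w|²/2 + f|z|^{2k−2} + s into the zero-energy flow of the Hamiltonian |p|²/2 + s/|q|^{2−2/k} + f, up to time reparametrization. -/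
open Set Filter intervalIntegral
open scoped Topology

/-- FTC: derivative within an arbitrary convex set. -/
lemma ftc_within {I : Set ℝ} (hI : Convex ℝ I) {g : ℝ → ℝ}
    (hg : ContinuousOn g I) {t₀ t : ℝ} (ht₀ : t₀ ∈ I) (ht : t ∈ I) :
    HasDerivWithinAt (fun u => ∫ x in t₀..u, g x) (g t) I t := by
  have hO : OrdConnected I := hI.ordConnected
  have hint : ∀ a ∈ I, ∀ b ∈ I, IntervalIntegrable g MeasureTheory.volume a b := fun a ha b hb =>
    (hg.mono (hO.uIcc_subset ha hb)).intervalIntegrable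
  rw [hasDerivWithinAt_iff_isLittleO, Asymptotics.isLittleO_iff]
  intro c hc
  have hcw : {v | dist (g v) (g t) ≤ c} ∈ 𝓝[I] t := by
    filter_upwards [hg t ht (Metric.closedBall_mem_nhds (g t) hc)] with v hv using hv
  rw [Metric.mem_nhdsWithin_iff] at hcw
  obtain ⟨δ, hδ, hball⟩ := hcw
  filter_upwards [self_mem_nhdsWithin,
    mem_nhdsWithin_of_mem_nhds (Metric.ball_mem_nhds t hδ)] with v hvI hvb
  rw [Metric.mem_ball, Real.dist_eq] at hvb
  have hsub : uIcc t v ⊆ I := hO.uIcc_subset ht hvI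
  have h1 : (∫ x in t₀..v, g x) - (∫ x in t₀..t, g x) = ∫ x in t..v, g x := by
    rw [← integral_add_adjacent_intervals (hint t₀ ht₀ t ht) (hint t ht v hvI)]; ring
  have h2 : (∫ x in t₀..v, g x) - (∫ x in t₀..t, g x) - (v - t) • g t
      = ∫ x in t..v, (g x - g t) := by
    rw [intervalIntegral.integral_sub (hint t ht v hvI) intervalIntegrable_const,
      intervalIntegral.integral_const, h1]
  rw [h2]
  have hbd : ∀ x ∈ uIoc t v, ‖g x - g t‖ ≤ c := by
    intro x hx
    have hx' : x ∈ uIcc t v := Ioc_subset_Icc_self hx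
    have hxI : x ∈ I := hsub hx'
    have hxd : |x - t| < δ := by
      have h1' := hx'.1; have h2' := hx'.2
      rcases le_total t v with h | h
      · rw [min_eq_left h] at h1'; rw [max_eq_right h] at h2'
        rw [abs_of_nonneg (by linarith)]
        calc x - t ≤ v - t := by linarith
          _ ≤ |v - t| := le_abs_self _
          _ < δ := hvb
      · rw [min_eq_right h] at h1'; rw [max_eq_left h] at h2'
        rw [abs_of_nonpos (by linarith)]
        calc -(x - t) ≤ -(v - t) := by linarith
          _ ≤ |v - t| := neg_le_abs _
          _ < δ := hvb
    have := hball ⟨by rwa [Metric.mem_ball, Real.dist_eq], hxI⟩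
    simpa [Real.dist_eq] using this
  calc ‖∫ x in t..v, (g x - g t)‖ ≤ c * |v - t| :=
        intervalIntegral.norm_integral_le_of_norm_le_const hbd
    _ = c * ‖v - t‖ := by rw [Real.norm_eq_abs]

/-- Continuity of the left inverse of a strictly monotone map on a convex set. -/
lemma sigma_cont {I : Set ℝ} (hI : Convex ℝ I) {τ σ : ℝ → ℝ}
    (hmono : StrictMonoOn τ I) (hσ : ∀ x ∈ I, σ (τ x) = x) {t : ℝ} (ht : t ∈ I) :
    Tendsto σ (𝓝[τ '' I] (τ t)) (𝓝 t) := by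
  have hO : OrdConnected I := hI.ordConnected
  rw [Metric.tendsto_nhdsWithin_nhds]
  intro ε hε
  classical
  set δ₁ : ℝ := if h : (t + ε/2) ∈ I then τ (t + ε/2) - τ t else 1 with hδ₁
  set δ₂ : ℝ := if h : (t - ε/2) ∈ I then τ t - τ (t - ε/2) else 1 with hδ₂
  have hδ₁pos : 0 < δ₁ := by
    rw [hδ₁]; split
    · next h => exact sub_pos.2 (hmono ht h (by linarith))
    · norm_num
  have hδ₂pos : 0 < δ₂ := by
    rw [hδ₂]; split
    · next h => exact sub_pos.2 (hmono h ht (by linarith))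
    · norm_num
  refine ⟨min δ₁ δ₂, lt_min hδ₁pos hδ₂pos, ?_⟩
  rintro u ⟨x, hxI, rfl⟩ hdist
  rw [hσ x hxI, Real.dist_eq]
  rw [Real.dist_eq] at hdist
  by_contra hcon
  push_neg at hcon
  rcases le_abs.mp hcon with hr | hl
  · -- x ≥ t + ε
    have hmem : t + ε/2 ∈ I := hO.out ht hxI ⟨by linarith, by linarith⟩
    have h1 : δ₁ = τ (t + ε/2) - τ t := by rw [hδ₁, dif_pos hmem]
    have h2 : τ (t + ε/2) ≤ τ x := le_of_lt (hmono hmem hxI (by linarith))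
    have : δ₁ ≤ |τ x - τ t| := le_trans (by linarith) (le_abs_self _)
    have := lt_of_le_of_lt this hdist
    simp only [lt_min_iff] at this
    linarith [this.1]
  · -- x ≤ t - ε
    have hmem : t - ε/2 ∈ I := hO.out hxI ht ⟨by linarith, by linarith⟩
    have h1 : δ₂ = τ t - τ (t - ε/2) := by rw [hδ₂, dif_pos hmem]
    have h2 : τ x ≤ τ (t - ε/2) := le_of_lt (hmono hxI hmem (by linarith))
    have : δ₂ ≤ |τ x - τ t| := le_trans (by linarith) (neg_le_abs _)
    have := lt_of_le_of_lt this hdist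
    simp only [lt_min_iff] at this
    linarith [this.2]

/-- Transfer a derivative through an increasing time reparametrization. -/
lemma transfer_deriv {I : Set ℝ} {τ σ : ℝ → ℝ} {t c : ℝ}
    (ht : t ∈ I) (hσ : ∀ x ∈ I, σ (τ x) = x)
    {F G : ℝ → ℂ} {d : ℂ}
    (hF : HasDerivWithinAt F d I t)
    (hτd : HasDerivWithinAt τ c I t) (hc : c ≠ 0)
    (hσcont : Tendsto σ (𝓝[τ '' I] (τ t)) (𝓝 t))
    (hG : ∀ u ∈ τ '' I, G u = F (σ u)) :
    HasDerivWithinAt G (c⁻¹ • d) (τ '' I) (τ t) := by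
  rw [hasDerivWithinAt_iff_tendsto_slope] at hF hτd ⊢
  have hmaps : MapsTo σ (τ '' I \ {τ t}) (I \ {t}) := by
    rintro u ⟨⟨x, hxI, rfl⟩, hne⟩
    rw [hσ x hxI]
    refine ⟨hxI, fun hx => hne ?_⟩
    simp only [Set.mem_singleton_iff] at hx ⊢
    rw [hx]
  have hσcont' : Tendsto σ (𝓝[τ '' I \ {τ t}] (τ t)) (𝓝[I \ {t}] t) := by
    rw [tendsto_nhdsWithin_iff]
    exact ⟨hσcont.mono_left (nhdsWithin_mono _ diff_subset),
      eventually_mem_nhdsWithin.mono fun u hu => hmaps hu⟩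
  have hcomb : Tendsto (fun v => (slope τ t v)⁻¹ • slope F t v) (𝓝[I \ {t}] t)
      (𝓝 (c⁻¹ • d)) := (hτd.inv₀ hc).smul hF
  have := hcomb.comp hσcont'
  refine this.congr' ?_
  filter_upwards [self_mem_nhdsWithin] with u hu
  obtain ⟨⟨x, hxI, rfl⟩, hne⟩ := hu
  have hσx : σ (τ x) = x := hσ x hxI
  have hxt : x ≠ t := fun h => hne (by rw [h]; rfl)
  have hτne : τ x - τ t ≠ 0 := by
    intro h
    apply hne
    simp only [Set.mem_singleton_iff]
    linarith [sub_eq_zero.mp h]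
  have hxtne : x - t ≠ 0 := sub_ne_zero.2 hxt
  simp only [Function.comp_apply, hσx]
  rw [slope_def_module, slope_def_module, slope_def_module]
  rw [hG (τ x) ⟨x, hxI, rfl⟩, hG (τ t) ⟨t, ht, rfl⟩, hσx, hσ t ht]
  rw [smul_smul]
  congr 1
  rw [smul_eq_mul, mul_inv, inv_inv, mul_right_comm, mul_inv_cancel₀ hxtne, one_mul]

/-- Power rule for a complex-valued function of a real variable. -/
lemma hasDerivWithinAt_pow_comp {v : ℝ → ℂ} {v' : ℂ} {s : Set ℝ} {x : ℝ}
    (h : HasDerivWithinAt v v' s x) (n : ℕ) :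
    HasDerivWithinAt (fun t => v t ^ n) ((n : ℂ) * v x ^ (n - 1) * v') s x := by
  induction n with
  | zero => simpa using hasDerivWithinAt_const x s (1 : ℂ)
  | succ n ih =>
    have h2 := ih.mul h
    have : HasDerivWithinAt (fun t => v t ^ (n + 1))
        ((n : ℂ) * v x ^ (n - 1) * v' * v x + v x ^ n * v') s x := by
      simpa [pow_succ, Pi.mul_def] using h2
    convert this using 1
    rcases Nat.eq_zero_or_pos n with rfl | hn
    · simp
    · have : n - 1 + 1 = n := Nat.succ_pred_eq_of_pos hn
      rw [Nat.add_sub_cancel]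
      have hpow : v x ^ (n - 1) * v x = v x ^ n := by
        rw [← pow_succ, this]
      push_cast
      rw [show (↑n:ℂ) * v x ^ (n - 1) * v' * v x = (↑n:ℂ) * (v x ^ (n-1) * v x) * v' by ring,
        hpow]
      ring

/-- Derivative of `normSq ∘ v`. -/
lemma normSq_deriv {v : ℝ → ℂ} {v' : ℂ} {s : Set ℝ} {x : ℝ}
    (h : HasDerivWithinAt v v' s x) :
    HasDerivWithinAt (fun t => Complex.normSq (v t))
      ((v' * (starRingEnd ℂ) (v x) + v x * (starRingEnd ℂ) v').re) s x := by
  have hconj : HasDerivWithinAt (fun t => (starRingEnd ℂ) (v t)) ((starRingEnd ℂ) v') s x :=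
    h.star
  have h1 := h.mul hconj
  have h2 := Complex.reCLM.hasFDerivAt.comp_hasDerivWithinAt x h1
  have heq : (fun t => Complex.normSq (v t))
      = (⇑Complex.reCLM ∘ fun t => v t * (starRingEnd ℂ) (v t)) := by
    funext t
    rw [Function.comp_apply, Complex.reCLM_apply, Complex.mul_conj, Complex.ofReal_re]
  rw [heq]
  exact h2

/-- The k-th power conformal map transforms the zero-energy flow of the Hooke-type
Hamiltonian `|w|²/2 + f|z|^{2k−2} + s` into the zero-energy flow of the Kepler-type
Hamiltonian `|p|²/2 + s/|q|^{2−2/k} + f`, up to the time reparametrization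
`τ(t) = k·∫_{t₀}^t |z(u)|^{2k−2} du`. -/
theorem stmt_2 (k : ℕ) (hk : 2 ≤ k) (f s : ℝ)
    (I : Set ℝ) (hI : Convex ℝ I) (t₀ : ℝ) (ht₀ : t₀ ∈ I)
    (z w : ℝ → ℂ) (hz0 : ∀ t ∈ I, z t ≠ 0)
    (hz : ∀ t ∈ I, HasDerivWithinAt z (w t) I t)
    (hw : ∀ t ∈ I, HasDerivWithinAt w
      ((-(2 * ((k : ℝ) - 1) * f * ‖z t‖ ^ (2 * k - 4))) • z t) I t)
    (hE : ‖w t₀‖ ^ 2 / 2 + f * ‖z t₀‖ ^ (2 * k - 2) + s = 0)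
    (τ : ℝ → ℝ)
    (hτ : τ = fun t => (k : ℝ) * ∫ u in t₀..t, ‖z u‖ ^ (2 * k - 2))
    (σ : ℝ → ℝ) (hσ : ∀ t ∈ I, σ (τ t) = t)
    (q p : ℝ → ℂ)
    (hqdef : ∀ u : ℝ, q u = z (σ u) ^ k)
    (hpdef : ∀ u : ℝ, p u = w (σ u) / (starRingEnd ℂ (z (σ u))) ^ (k - 1)) :
    (∀ t ∈ I, ‖w t‖ ^ 2 / 2 + f * ‖z t‖ ^ (2 * k - 2) + s = 0) ∧
    (∀ t ∈ I,
      HasDerivWithinAt q (p (τ t)) (τ '' I) (τ t) ∧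
      HasDerivWithinAt p
        (((2 - 2 / (k : ℝ)) * s / ‖q (τ t)‖ ^ ((4 : ℝ) - 2 / (k : ℝ)))
          • q (τ t)) (τ '' I) (τ t) ∧
      ‖p (τ t)‖ ^ 2 / 2
        + s / ‖q (τ t)‖ ^ ((2 : ℝ) - 2 / (k : ℝ)) + f = 0) := by
  obtain ⟨n, rfl⟩ : ∃ n, k = n + 2 := ⟨k - 2, by omega⟩
  have e1 : 2 * (n + 2) - 2 = 2 * n + 2 := by omega
  have e2 : 2 * (n + 2) - 4 = 2 * n := by omega
  have e3 : n + 2 - 1 = n + 1 := rfl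
  simp only [e1, e2, e3] at hw hE hτ hpdef ⊢
  -- basic facts
  have habs : ∀ t ∈ I, 0 < ‖z t‖ := fun t ht => norm_pos_iff.mpr (hz0 t ht)
  have hconj : ∀ t ∈ I, HasDerivWithinAt (fun u => (starRingEnd ℂ) (z u))
      ((starRingEnd ℂ) (w t)) I t := fun t ht => (hz t ht).star
  -- |z|^(2n+2) = normSq^(n+1) etc.
  have habs_normSq : ∀ (v : ℂ) (m : ℕ), ‖v‖ ^ (2 * m) = Complex.normSq v ^ m := by
    intro v m; rw [pow_mul, Complex.sq_norm]
  have habs_normSq' : ∀ (v : ℂ) (m : ℕ), ‖v‖ ^ (2 * m + 2) = Complex.normSq v ^ (m + 1) := by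
    intro v m; rw [show 2 * m + 2 = 2 * (m + 1) by ring, pow_mul, Complex.sq_norm]
  -- Part 1 : energy conservation
  set E : ℝ → ℝ := fun t => Complex.normSq (w t) / 2 + f * Complex.normSq (z t) ^ (n + 1) + s
    with hEdef
  have hEform : ∀ t, ‖w t‖ ^ 2 / 2 + f * ‖z t‖ ^ (2 * n + 2) + s = E t := by
    intro t; rw [Complex.sq_norm, habs_normSq']
  have hE' : ∀ t ∈ I, HasDerivWithinAt E 0 I t := by
    intro t ht
    have h1 := normSq_deriv (hz t ht)
    have h2 := normSq_deriv (hw t ht)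
    have h3 := ((h1.pow (n + 1)).const_mul f)
    have h4 := ((h2.div_const 2).add h3).add_const s
    convert h4 using 1
    · rfl
    · rfl
    · rfl
    rw [habs_normSq] at *
    have haux : ∀ (a : ℝ) (Z W : ℂ), ((a • Z) * (starRingEnd ℂ) W + W * (starRingEnd ℂ) (a • Z)).re
        = a * ((W * (starRingEnd ℂ) Z + Z * (starRingEnd ℂ) W).re) := by
      intro a Z W
      simp [Complex.mul_re, Complex.add_re, Complex.smul_re, Complex.smul_im]
      ring
    rw [haux]
    push_cast
    ring
  have hEconst : ∀ t ∈ I, E t = 0 := by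
    intro t ht
    have h0 : E t₀ = 0 := by rw [← hEform t₀]; exact hE
    have hb := hI.norm_image_sub_le_of_norm_hasDerivWithin_le
      (f' := fun _ => (0:ℝ)) (C := 0) (fun x hx => hE' x hx) (fun x _ => by simp) ht₀ ht
    rw [zero_mul] at hb
    have h2 : E t - E t₀ = 0 := norm_le_zero_iff.mp hb
    linarith
  have part1 : ∀ t ∈ I, ‖w t‖ ^ 2 / 2 + f * ‖z t‖ ^ (2 * n + 2) + s = 0 := by
    intro t ht; rw [hEform]; exact hEconst t ht
  refine ⟨part1, ?_⟩
  -- Part 2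
  -- τ derivative and monotonicity
  have hzc : ContinuousOn z I := fun t ht => (hz t ht).continuousWithinAt
  have hgcont : ContinuousOn (fun u => ‖z u‖ ^ (2 * n + 2)) I :=
    (continuous_norm.comp_continuousOn hzc).pow _
  set c : ℝ → ℝ := fun t => ((n + 2 : ℕ) : ℝ) * ‖z t‖ ^ (2 * n + 2) with hcdef
  have hτd : ∀ t ∈ I, HasDerivWithinAt τ (c t) I t := by
    intro t ht
    rw [hτ]
    exact (ftc_within hI hgcont ht₀ ht).const_mul _
  have hcpos : ∀ t ∈ I, 0 < c t := by
    intro t ht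
    have := habs t ht
    positivity
  have hτmono : StrictMonoOn τ I := by
    apply strictMonoOn_of_deriv_pos hI (fun t ht => (hτd t ht).continuousWithinAt)
    intro x hx
    have hxI : x ∈ I := interior_subset hx
    rw [((hτd x hxI).hasDerivAt (mem_interior_iff_mem_nhds.mp hx)).deriv]
    exact hcpos x hxI
  intro t ht
  have hσc : Tendsto σ (𝓝[τ '' I] (τ t)) (𝓝 t) := sigma_cont hI hτmono hσ ht
  have hcne : c t ≠ 0 := ne_of_gt (hcpos t ht)
  -- derivative of q
  have hZd : HasDerivWithinAt (fun x => z x ^ (n + 2))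
      (((n + 2 : ℕ) : ℂ) * z t ^ (n + 1) * w t) I t := by
    simpa using hasDerivWithinAt_pow_comp (hz t ht) (n + 2)
  have hqD : HasDerivWithinAt q ((c t)⁻¹ • (((n + 2 : ℕ) : ℂ) * z t ^ (n + 1) * w t))
      (τ '' I) (τ t) :=
    transfer_deriv ht hσ hZd (hτd t ht) hcne hσc (fun u _ => hqdef u)
  -- derivative of p
  have hCd : HasDerivWithinAt (fun x => (starRingEnd ℂ) (z x) ^ (n + 1))
      (((n + 1 : ℕ) : ℂ) * (starRingEnd ℂ) (z t) ^ n * (starRingEnd ℂ) (w t)) I t := by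
    simpa using hasDerivWithinAt_pow_comp (hconj t ht) (n + 1)
  have hden : (starRingEnd ℂ) (z t) ^ (n + 1) ≠ 0 :=
    pow_ne_zero _ (by simpa using hz0 t ht)
  set Dw : ℂ := (-(2 * (((n + 2 : ℕ) : ℝ) - 1) * f * ‖z t‖ ^ (2 * n)) • z t
        * (starRingEnd ℂ) (z t) ^ (n + 1)
      - w t * (((n + 1 : ℕ) : ℂ) * (starRingEnd ℂ) (z t) ^ n * (starRingEnd ℂ) (w t)))
      / ((starRingEnd ℂ) (z t) ^ (n + 1)) ^ 2 with hDwdef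
  have hWd : HasDerivWithinAt (fun x => w x / (starRingEnd ℂ) (z x) ^ (n + 1)) Dw I t :=
    (hw t ht).div hCd hden
  have hpD : HasDerivWithinAt p ((c t)⁻¹ • Dw) (τ '' I) (τ t) :=
    transfer_deriv ht hσ hWd (hτd t ht) hcne hσc (fun u _ => hpdef u)
  -- values
  have hqτ : q (τ t) = z t ^ (n + 2) := by rw [hqdef, hσ t ht]
  have hpτ : p (τ t) = w t / (starRingEnd ℂ) (z t) ^ (n + 1) := by rw [hpdef, hσ t ht]
  have habsq : ‖q (τ t)‖ = ‖z t‖ ^ (n + 2) := by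
    rw [hqτ, norm_pow]
  refine ⟨?_, ?_, ?_⟩
  · convert hqD using 1
    rw [hpτ]
    have hZne := hz0 t ht
    have hCne : (starRingEnd ℂ) (z t) ≠ 0 := by simpa using hZne
    have hn2 : ((n + 2 : ℕ) : ℂ) ≠ 0 := Nat.cast_ne_zero.mpr (by omega)
    have hkey : ((‖z t‖ ^ (2 * n + 2) : ℝ) : ℂ)
        = z t ^ (n + 1) * (starRingEnd ℂ) (z t) ^ (n + 1) := by
      rw [habs_normSq', Complex.ofReal_pow, ← Complex.mul_conj, mul_pow]
    rw [eq_comm, inv_smul_eq_iff₀ hcne, hcdef]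
    rw [Complex.real_smul, Complex.ofReal_mul, Complex.ofReal_natCast, hkey]
    field_simp
  · convert hpD using 1
    rw [habsq, hqτ]
    have hZne := hz0 t ht
    have hCne : (starRingEnd ℂ) (z t) ≠ 0 := by simpa using hZne
    have hn2 : ((n + 2 : ℕ) : ℂ) ≠ 0 := Nat.cast_ne_zero.mpr (by omega)
    have hn2' : ((n + 2 : ℕ) : ℝ) ≠ 0 := by positivity
    have hR : 0 < ‖z t‖ := habs t ht
    have hrpow : (‖z t‖ ^ (n + 2) : ℝ) ^ ((4 : ℝ) - 2 / ((n + 2 : ℕ) : ℝ))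
        = ‖z t‖ ^ (4 * n + 6 : ℕ) := by
      rw [← Real.rpow_natCast (‖z t‖) (n + 2), ← Real.rpow_mul hR.le]
      rw [show ((n + 2 : ℕ) : ℝ) * ((4 : ℝ) - 2 / ((n + 2 : ℕ) : ℝ)) = ((4 * n + 6 : ℕ) : ℝ) by
        field_simp; push_cast; ring]
      rw [Real.rpow_natCast]
    rw [hrpow]
    have hEt := part1 t ht
    have hWW : w t * (starRingEnd ℂ) (w t)
        = (((-2) * (f * ‖z t‖ ^ (2 * n + 2) + s) : ℝ) : ℂ) := by
      rw [Complex.mul_conj]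
      congr 1
      rw [← Complex.sq_norm]
      linarith
    have hkey0 : ((‖z t‖ ^ (2 * n) : ℝ) : ℂ)
        = z t ^ n * (starRingEnd ℂ) (z t) ^ n := by
      rw [habs_normSq, Complex.ofReal_pow, ← Complex.mul_conj, mul_pow]
    have hkey2 : ((‖z t‖ ^ (2 * n + 2) : ℝ) : ℂ)
        = z t ^ (n + 1) * (starRingEnd ℂ) (z t) ^ (n + 1) := by
      rw [habs_normSq', Complex.ofReal_pow, ← Complex.mul_conj, mul_pow]
    have hkey3 : ((‖z t‖ ^ (4 * n + 6 : ℕ) : ℝ) : ℂ)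
        = z t ^ (2 * n + 3) * (starRingEnd ℂ) (z t) ^ (2 * n + 3) := by
      rw [show (4 * n + 6 : ℕ) = 2 * (2 * n + 3) by ring, habs_normSq,
        Complex.ofReal_pow, ← Complex.mul_conj, mul_pow]
    have hsub : w t * (((n + 1 : ℕ) : ℂ) * (starRingEnd ℂ) (z t) ^ n * (starRingEnd ℂ) (w t))
        = ((n + 1 : ℕ) : ℂ) * (starRingEnd ℂ) (z t) ^ n
          * ((((-2) * (f * ‖z t‖ ^ (2 * n + 2) + s) : ℝ)) : ℂ) := by
      rw [← hWW]; ring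
    rw [eq_comm, inv_smul_eq_iff₀ hcne, hDwdef, hsub, smul_smul, hcdef]
    simp only [Complex.real_smul]
    simp only [Complex.ofReal_mul, Complex.ofReal_div, Complex.ofReal_sub, Complex.ofReal_neg,
      Complex.ofReal_add, Complex.ofReal_natCast, Complex.ofReal_ofNat]
    simp only [hkey0, hkey2, hkey3]
    have h2n : ((n : ℂ) + 2) ≠ 0 := by
      have : ((n + 2 : ℕ) : ℂ) = (n : ℂ) + 2 := by push_cast; ring
      rw [← this]; exact hn2
    field_simp [h2n]
    push_cast
    ring
  · rw [hpτ, habsq]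
    rw [norm_div, norm_pow, Complex.norm_conj]
    have hR : 0 < ‖z t‖ := habs t ht
    have hn2' : ((n + 2 : ℕ) : ℝ) ≠ 0 := by positivity
    have hrpow2 : (‖z t‖ ^ (n + 2) : ℝ) ^ ((2 : ℝ) - 2 / ((n + 2 : ℕ) : ℝ))
        = ‖z t‖ ^ (2 * n + 2 : ℕ) := by
      rw [← Real.rpow_natCast (‖z t‖) (n + 2), ← Real.rpow_mul hR.le]
      rw [show ((n + 2 : ℕ) : ℝ) * ((2 : ℝ) - 2 / ((n + 2 : ℕ) : ℝ)) = ((2 * n + 2 : ℕ) : ℝ) by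
        field_simp; push_cast; ring]
      rw [Real.rpow_natCast]
    rw [hrpow2]
    have hEt := part1 t ht
    rw [div_pow, ← pow_mul]
    rw [show (n + 1) * 2 = 2 * n + 2 by ring]
    have hRne : ‖z t‖ ^ (2 * n + 2) ≠ 0 := pow_ne_zero _ (ne_of_gt hR)
    field_simp
    linear_combination 2 * hEt
end

section
/- Let f ∈ ℝ and a, b > 0, and define G(z,w) := (a² − b²)·(2f·z₁² + w₁²) + (z₁w₂ − z₂w₁)² for z, w ∈ ℝ². Then: (i) for every twice-differentiable curve z : I → ℝ² satisfying the Hooke equation z''(t) = −2f·z(t), the function t ↦ G(z(t), z'(t)) is constant; (ii) for every point z on the centered ellipse {z : z₁²/a² + z₂²/b² = 1}, setting n := (z₁/a², z₂/b²) and w' := w − 2(⟨w,n⟩/‖n‖²)·n for any w ∈ ℝ², one has G(z, w') = G(z, w). Hence G is a first integral of the Hooke billiard in the centered ellipse. -/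
/-- The first integral `G(z,w) = c·(2f·z₁² + w₁²) + (z₁w₂ − z₂w₁)²` of Hooke billiards. -/
def hookeG (f c : ℝ) (z w : ℝ × ℝ) : ℝ :=
  c * (2 * f * z.1 ^ 2 + w.1 ^ 2) + (z.1 * w.2 - z.2 * w.1) ^ 2

/-- `G(z,w) = (a² − b²)(2f·z₁² + w₁²) + (z₁w₂ − z₂w₁)²` is a first integral of the
Hooke billiard in the centered ellipse `z₁²/a² + z₂²/b² = 1`: it is constant along
solutions of `z'' = −2f·z` and invariant under elastic reflections at the ellipse. -/
theorem stmt_3 (f a b : ℝ) (ha : 0 < a) (hb : 0 < b) :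
    (∀ I : Set ℝ, Convex ℝ I → ∀ z v : ℝ → ℝ × ℝ,
      (∀ t ∈ I, HasDerivWithinAt z (v t) I t) →
      (∀ t ∈ I, HasDerivWithinAt v ((-(2 * f)) • z t) I t) →
      ∀ t ∈ I, ∀ t' ∈ I,
        hookeG f (a ^ 2 - b ^ 2) (z t) (v t) = hookeG f (a ^ 2 - b ^ 2) (z t') (v t')) ∧
    (∀ z w : ℝ × ℝ, z.1 ^ 2 / a ^ 2 + z.2 ^ 2 / b ^ 2 = 1 →
      ∀ n w' : ℝ × ℝ, n = (z.1 / a ^ 2, z.2 / b ^ 2) →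
      w' = w - (2 * ((w.1 * n.1 + w.2 * n.2) / (n.1 ^ 2 + n.2 ^ 2))) • n →
      hookeG f (a ^ 2 - b ^ 2) z w' = hookeG f (a ^ 2 - b ^ 2) z w) := by
  constructor
  · intro I hI z v hz hv t ht t' ht'
    set c := a ^ 2 - b ^ 2
    -- component derivatives
    have hz1 : ∀ s ∈ I, HasDerivWithinAt (fun u => (z u).1) (v s).1 I s := fun s hs => by
      simpa using ((hz s hs).hasFDerivWithinAt.fst).hasDerivWithinAt
    have hz2 : ∀ s ∈ I, HasDerivWithinAt (fun u => (z u).2) (v s).2 I s := fun s hs => by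
      simpa using ((hz s hs).hasFDerivWithinAt.snd).hasDerivWithinAt
    have hv1 : ∀ s ∈ I, HasDerivWithinAt (fun u => (v u).1) (-(2 * f) * (z s).1) I s := fun s hs => by
      simpa using ((hv s hs).hasFDerivWithinAt.fst).hasDerivWithinAt
    have hv2 : ∀ s ∈ I, HasDerivWithinAt (fun u => (v u).2) (-(2 * f) * (z s).2) I s := fun s hs => by
      simpa using ((hv s hs).hasFDerivWithinAt.snd).hasDerivWithinAt
    have key : ∀ s ∈ I, HasDerivWithinAt
        (fun u => hookeG f c (z u) (v u)) 0 I s := by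
      intro s hs
      have h1 := hz1 s hs
      have h2 := hz2 s hs
      have h3 := hv1 s hs
      have h4 := hv2 s hs
      have hG : HasDerivWithinAt (fun u => hookeG f c (z u) (v u))
          (c * (2 * f * (2 * (z s).1 ^ 1 * (v s).1) + 2 * (v s).1 ^ 1 * (-(2 * f) * (z s).1)) +
            2 * ((z s).1 * (v s).2 - (z s).2 * (v s).1) ^ 1 *
              (((v s).1 * (v s).2 + (z s).1 * (-(2 * f) * (z s).2)) -
               ((v s).2 * (v s).1 + (z s).2 * (-(2 * f) * (z s).1)))) I s := by
        unfold hookeG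
        exact (((h1.pow 2).const_mul (2 * f)).add (h3.pow 2)).const_mul c |>.add
          (((h1.mul h4).sub (h2.mul h3)).pow 2)
      convert hG using 1
      ring
    have bound := hI.norm_image_sub_le_of_norm_hasFDerivWithin_le
      (f' := fun _ => (0 : ℝ →L[ℝ] ℝ)) (C := 0)
      (fun s hs => by
        have h0 := (key s hs).hasFDerivWithinAt
        exact h0.congr_fderiv (by ext; simp))
      (fun s hs => by simp) ht ht'
    have : ‖hookeG f c (z t') (v t') - hookeG f c (z t) (v t)‖ ≤ 0 := by
      simpa using bound
    have := norm_sub_eq_zero_iff.mp (le_antisymm this (norm_nonneg _))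
    exact this.symm
  · rintro ⟨z1, z2⟩ ⟨w1, w2⟩ h n w' hn hw'
    subst hn; subst hw'
    simp only [hookeG, Prod.smul_mk, Prod.mk_sub_mk, smul_eq_mul] at *
    have ha' := ha.ne'
    have hb' := hb.ne'
    have hE : z1 ^ 2 * b ^ 2 + z2 ^ 2 * a ^ 2 = a ^ 2 * b ^ 2 := by
      field_simp at h; linarith
    have hd : (z1 / a ^ 2) ^ 2 + (z2 / b ^ 2) ^ 2 ≠ 0 := by
      rcases eq_or_ne z1 0 with h1 | h1
      · rcases eq_or_ne z2 0 with h2 | h2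
        · exfalso; rw [h1, h2] at hE; simp [ha', hb'] at hE
        · have : (z2 / b ^ 2) ^ 2 > 0 := by positivity
          nlinarith [sq_nonneg (z1 / a ^ 2)]
      · have : (z1 / a ^ 2) ^ 2 > 0 := by positivity
        nlinarith [sq_nonneg (z2 / b ^ 2)]
    have hd2 : z1 ^ 2 * (b ^ 2) ^ 2 + z2 ^ 2 * (a ^ 2) ^ 2 ≠ 0 := by
      intro hc
      apply hd
      field_simp
      linarith
    set u := z1 / a ^ 2 with hu
    set v := z2 / b ^ 2 with hv
    set k := 2 * ((w1 * u + w2 * v) / (u ^ 2 + v ^ 2)) with hk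
    have hk' : k * (u ^ 2 + v ^ 2) = 2 * (w1 * u + w2 * v) := by
      rw [hk]; field_simp
    have hz1 : z1 = a ^ 2 * u := by rw [hu]; field_simp
    have hz2 : z2 = b ^ 2 * v := by rw [hv]; field_simp
    have hcon0 : (a ^ 2 * b ^ 2) * (a ^ 2 * u ^ 2 + b ^ 2 * v ^ 2 - 1) = 0 := by
      rw [hz1, hz2] at hE; linear_combination hE
    have hcon : a ^ 2 * u ^ 2 + b ^ 2 * v ^ 2 = 1 := by
      have := (mul_eq_zero.mp hcon0).resolve_left (by positivity)
      linarith
    rw [hz1, hz2]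
    linear_combination ((a ^ 2 - b ^ 2) * k * u * a ^ 2 * u) * hk' +
      ((a ^ 2 - b ^ 2) * k * u * (2 * w1 - k * u)) * hcon
end

section
/- Let f ∈ ℝ and a, b > 0, and define G(z,w) := (a² + b²)·(2f·z₁² + w₁²) + (z₁w₂ − z₂w₁)² for z, w ∈ ℝ². Then: (i) for every twice-differentiable curve z : I → ℝ² satisfying z''(t) = −2f·z(t), the function t ↦ G(z(t), z'(t)) is constant; (ii) for every point z on the centered hyperbola {z : z₁²/a² − z₂²/b² = 1}, setting n := (z₁/a², −z₂/b²) and w' := w − 2(⟨w,n⟩/‖n‖²)·n for any w ∈ ℝ², one has G(z, w') = G(z, w). Hence G is a first integral of the Hooke billiard in the centered hyperbola. -/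
private theorem constOn (s : Set ℝ) (hs : Convex ℝ s) (g : ℝ → ℝ)
    (h : ∀ x ∈ s, HasDerivWithinAt g 0 s x) (x : ℝ) (hx : x ∈ s) (y : ℝ) (hy : y ∈ s) :
    g x = g y := by
  have hz : (ContinuousLinearMap.toSpanSingleton ℝ (0 : ℝ)) = 0 := by ext; simp
  have := hs.norm_image_sub_le_of_norm_hasFDerivWithin_le
    (C := 0) (f' := fun _ => (0 : ℝ →L[ℝ] ℝ)) (fun u hu => hz ▸ (h u hu).hasFDerivWithinAt)
    (fun u hu => by simp) hy hx
  have h0 : ‖g x - g y‖ ≤ 0 := by simpa using this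
  have : ‖g x - g y‖ = 0 := le_antisymm h0 (norm_nonneg _)
  simpa [sub_eq_zero] using norm_eq_zero.mp this

/-- `G(z,w) = (a² + b²)(2f·z₁² + w₁²) + (z₁w₂ − z₂w₁)²` is a first integral of the
Hooke billiard in the centered hyperbola `z₁²/a² − z₂²/b² = 1`: it is constant along
solutions of `z'' = −2f·z` and invariant under elastic reflections at the hyperbola. -/
theorem stmt_4 (f a b : ℝ) (ha : 0 < a) (hb : 0 < b) :
    (∀ I : Set ℝ, Convex ℝ I → ∀ z v : ℝ → ℝ × ℝ,
      (∀ t ∈ I, HasDerivWithinAt z (v t) I t) →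
      (∀ t ∈ I, HasDerivWithinAt v ((-(2 * f)) • z t) I t) →
      ∀ t ∈ I, ∀ t' ∈ I,
        hookeG f (a ^ 2 + b ^ 2) (z t) (v t) = hookeG f (a ^ 2 + b ^ 2) (z t') (v t')) ∧
    (∀ z w : ℝ × ℝ, z.1 ^ 2 / a ^ 2 - z.2 ^ 2 / b ^ 2 = 1 →
      ∀ n w' : ℝ × ℝ, n = (z.1 / a ^ 2, -z.2 / b ^ 2) →
      w' = w - (2 * ((w.1 * n.1 + w.2 * n.2) / (n.1 ^ 2 + n.2 ^ 2))) • n →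
      hookeG f (a ^ 2 + b ^ 2) z w' = hookeG f (a ^ 2 + b ^ 2) z w) := by
  set c : ℝ := a ^ 2 + b ^ 2 with hc
  constructor
  · intro I hI z v hz hv t ht t' ht'
    apply constOn I hI (fun s => hookeG f c (z s) (v s)) ?_ t ht t' ht'
    intro s hs
    have h1 : HasDerivWithinAt (fun u => (z u).1) (v s).1 I s := (hz s hs).fst
    have h2 : HasDerivWithinAt (fun u => (z u).2) (v s).2 I s := (hz s hs).snd
    have h3 : HasDerivWithinAt (fun u => (v u).1) ((-(2 * f)) • z s).1 I s := (hv s hs).fst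
    have h4 : HasDerivWithinAt (fun u => (v u).2) ((-(2 * f)) • z s).2 I s := (hv s hs).snd
    have E := (((h1.pow 2).const_mul (2 * f)).add (h3.pow 2)).const_mul c |>.add
      (((h1.mul h4).sub (h2.mul h3)).pow 2)
    simp only [hookeG]
    convert E using 1
    · rfl
    · rfl
    · rfl
    simp only [Prod.smul_fst, Prod.smul_snd, smul_eq_mul]
    push_cast
    ring
  · intro z w hzw n w' hn hw'
    obtain ⟨z1, z2⟩ := z; obtain ⟨w1, w2⟩ := w
    simp only [hookeG] at *
    have ha' : a ^ 2 ≠ 0 := by positivity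
    have hb' : b ^ 2 ≠ 0 := by positivity
    have hrel : z1 ^ 2 * b ^ 2 - z2 ^ 2 * a ^ 2 = a ^ 2 * b ^ 2 := by
      field_simp at hzw; linarith
    have hz1 : z1 ≠ 0 := by
      intro h; rw [h] at hrel
      nlinarith [sq_nonneg z2, mul_pos (pow_pos ha 2) (pow_pos hb 2)]
    have hd : z1 ^ 2 * b ^ 4 + z2 ^ 2 * a ^ 4 ≠ 0 := by positivity
    have hden : (z1 / a ^ 2) ^ 2 + (-z2 / b ^ 2) ^ 2 ≠ 0 := by positivity
    set S : ℝ := 2 * (w1 * z1 * b ^ 2 - w2 * z2 * a ^ 2) / (z1 ^ 2 * b ^ 4 + z2 ^ 2 * a ^ 4)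
      with hS
    have key1 : S * (z1 ^ 2 * b ^ 4 + z2 ^ 2 * a ^ 4)
        = 2 * (w1 * z1 * b ^ 2 - w2 * z2 * a ^ 2) := by
      rw [hS, div_mul_cancel₀ _ hd]
    have hw1' : w'.1 = w1 - S * z1 * b ^ 2 := by
      rw [hw', hn, hS]
      simp only [Prod.fst_sub, Prod.smul_fst, smul_eq_mul]
      field_simp
      ring
    have hw2' : w'.2 = w2 + S * z2 * a ^ 2 := by
      rw [hw', hn, hS]
      simp only [Prod.snd_sub, Prod.smul_snd, smul_eq_mul]
      field_simp
      ring
    rw [hw1', hw2']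
    apply mul_left_cancel₀ ha'
    linear_combination (2 * S * c * z1 * w1 - S ^ 2 * c * z1 ^ 2 * b ^ 2) * hrel
      + (S * c * z1 ^ 2) * key1
end

section
/- Let s, f, ã ∈ ℝ, let z ∈ ℝ² \ {0} and w ∈ ℝ², and define q₁ := z₁² − z₂², q₂ := 2z₁z₂, p₁ := (z₁w₁ − z₂w₂)/(z₁² + z₂²), p₂ := (z₁w₂ + z₂w₁)/(z₁² + z₂²). Then: (a) z₁w₂ − z₂w₁ = q₁p₂ − q₂p₁; (b) if the energy relation (p₁² + p₂²)/2 − s/√(q₁² + q₂²) + f = 0 holds, then 2ã·(2f·z₁² + w₁²) + (z₁w₂ − z₂w₁)² = (p₁q₂ − p₂q₁)² − 2ã·((q₁p₂ − q₂p₁)·p₂ − s·q₁/√(q₁² + q₂²)) + 2ã·s. In other words, under the complex square map the Hooke first integral 2ã(2fz₁² + w₁²) + (z₁w₂ − z₂w₁)² is transformed, up to an additive constant, into the Gallavotti–Jauslin first integral A(p,q) = (p₁q₂ − p₂q₁)² − 2ã((q₁p₂ − q₂p₁)p₂ − sq₁/√(q₁²+q₂²)) on the (−f)-energy hypersurface of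 the Kepler problem with force function s/|q|. -/
/-- Under the complex square map `(z₁, z₂) ↦ (z₁² − z₂², 2z₁z₂)` with cotangent lift
`p = w·z/|z|²`, the angular momentum is preserved, and on the energy hypersurface
`|p|²/2 − s/|q| + f = 0` of the Kepler problem the Hooke first integral
`2aTilde(2f·z₁² + w₁²) + (z₁w₂ − z₂w₁)²` is transformed, up to the additive constant `2aTildes`,
into the Gallavotti–Jauslin first integral
`A(p,q) = (p₁q₂ − p₂q₁)² − 2aTilde((q₁p₂ − q₂p₁)p₂ − s·q₁/√(q₁²+q₂²))`. -/
theorem stmt_7 (s f aTilde : ℝ) (z w : ℝ × ℝ) (hz : z ≠ 0)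
    (q p : ℝ × ℝ)
    (hq : q = (z.1 ^ 2 - z.2 ^ 2, 2 * z.1 * z.2))
    (hp : p = ((z.1 * w.1 - z.2 * w.2) / (z.1 ^ 2 + z.2 ^ 2),
               (z.1 * w.2 + z.2 * w.1) / (z.1 ^ 2 + z.2 ^ 2))) :
    z.1 * w.2 - z.2 * w.1 = q.1 * p.2 - q.2 * p.1 ∧
    ((p.1 ^ 2 + p.2 ^ 2) / 2 - s / Real.sqrt (q.1 ^ 2 + q.2 ^ 2) + f = 0 →
      2 * aTilde * (2 * f * z.1 ^ 2 + w.1 ^ 2) + (z.1 * w.2 - z.2 * w.1) ^ 2 =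
        (p.1 * q.2 - p.2 * q.1) ^ 2
          - 2 * aTilde * ((q.1 * p.2 - q.2 * p.1) * p.2
              - s * q.1 / Real.sqrt (q.1 ^ 2 + q.2 ^ 2))
          + 2 * aTilde * s) := by
  have hz' : z.1 ≠ 0 ∨ z.2 ≠ 0 := by
    by_contra h
    push_neg at h
    exact hz (Prod.ext h.1 h.2)
  have hr : (0:ℝ) < z.1 ^ 2 + z.2 ^ 2 := by
    rcases hz' with h | h <;> positivity
  subst hq hp
  have hsqrt : Real.sqrt ((z.1 ^ 2 - z.2 ^ 2) ^ 2 + (2 * z.1 * z.2) ^ 2)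
      = z.1 ^ 2 + z.2 ^ 2 := by
    rw [show (z.1 ^ 2 - z.2 ^ 2) ^ 2 + (2 * z.1 * z.2) ^ 2 = (z.1 ^ 2 + z.2 ^ 2) ^ 2 by ring,
      Real.sqrt_sq hr.le]
  simp only [hsqrt]
  have hr0 := hr.ne'
  constructor
  · field_simp
    ring
  · intro h
    field_simp at h ⊢
    linear_combination 2 * aTilde * z.1 ^ 2 * h
end

section
/- Let s ∈ ℝ and define W(q,p) := (q₁p₂ − q₂p₁)·p₂ − s·q₁/√(q₁² + q₂²) for q ∈ ℝ² \ {0}, p ∈ ℝ². Then: (i) for every twice-differentiable curve q : I → ℝ² \ {0} satisfying the Kepler equation q''(t) = −s·q(t)/‖q(t)‖³, the function t ↦ W(q(t), q'(t)) is constant; (ii) for every c ≠ 0 and every point q on the parabola {q₁ = c² − q₂²/(4c²)} (which is focused at the origin with the q₁-axis as its axis), the elastic reflection p' of any p ∈ ℝ² at this parabola at q (with normal n = (1, q₂/(2c²))) satisfies W(q,p') = W(q,p); (iii) the same invariance holds at every point of the oppositely oriented focused parabola {q₁ = q₂²/(4c²) − c²}, c ≠ 0 (with normal n = (1, −q₂/(2c²))).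 Hence W is a first integral of the Kepler billiard with any combination of focused parabolae with the q₁-axis as common axis as reflection wall. -/
/-- The first integral `W(q,p) = (q₁p₂ − q₂p₁)·p₂ − s·q₁/√(q₁²+q₂²)` of Kepler
billiards with focused parabolic walls. -/
noncomputable def keplerW (s : ℝ) (q p : ℝ × ℝ) : ℝ :=
  (q.1 * p.2 - q.2 * p.1) * p.2 - s * q.1 / Real.sqrt (q.1 ^ 2 + q.2 ^ 2)

lemma hdw_fst {f : ℝ → ℝ × ℝ} {f' : ℝ × ℝ} {s : Set ℝ} {x : ℝ}
    (h : HasDerivWithinAt f f' s x) : HasDerivWithinAt (fun t => (f t).1) f'.1 s x := by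
  simpa using (h.hasFDerivWithinAt.fst).hasDerivWithinAt

lemma hdw_snd {f : ℝ → ℝ × ℝ} {f' : ℝ × ℝ} {s : Set ℝ} {x : ℝ}
    (h : HasDerivWithinAt f f' s x) : HasDerivWithinAt (fun t => (f t).2) f'.2 s x := by
  simpa using (h.hasFDerivWithinAt.snd).hasDerivWithinAt

lemma keplerW_hasDeriv_zero (s : ℝ) (I : Set ℝ) (q v : ℝ → ℝ × ℝ)
    (hq0 : ∀ t ∈ I, q t ≠ 0)
    (hq : ∀ t ∈ I, HasDerivWithinAt q (v t) I t)
    (hv : ∀ t ∈ I, HasDerivWithinAt v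
      ((-(s / Real.sqrt ((q t).1 ^ 2 + (q t).2 ^ 2) ^ 3)) • q t) I t)
    (t : ℝ) (ht : t ∈ I) :
    HasDerivWithinAt (fun t => keplerW s (q t) (v t)) 0 I t := by
  set a := (q t).1 with ha
  set b := (q t).2 with hb
  set u := (v t).1 with hu
  set w := (v t).2 with hw
  have hR0 : 0 < a ^ 2 + b ^ 2 := by
    have h : a ≠ 0 ∨ b ≠ 0 := by
      by_contra h; push_neg at h
      exact hq0 t ht (Prod.ext h.1 h.2)
    rcases h with h | h <;> positivity
  have hr0 : 0 < Real.sqrt (a ^ 2 + b ^ 2) := Real.sqrt_pos.2 hR0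
  set r := Real.sqrt (a ^ 2 + b ^ 2) with hrdef
  have hr2 : r ^ 2 = a ^ 2 + b ^ 2 := Real.sq_sqrt hR0.le
  set k := s / r ^ 3 with hk
  have h1 : HasDerivWithinAt (fun t => (q t).1) u I t := hdw_fst (hq t ht)
  have h2 : HasDerivWithinAt (fun t => (q t).2) w I t := hdw_snd (hq t ht)
  have h3 : HasDerivWithinAt (fun t => (v t).1) (-k * a) I t := by
    simpa using hdw_fst (hv t ht)
  have h4 : HasDerivWithinAt (fun t => (v t).2) (-k * b) I t := by
    simpa using hdw_snd (hv t ht)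
  have hR : HasDerivWithinAt (fun t => (q t).1 ^ 2 + (q t).2 ^ 2)
      (2 * a ^ 1 * u + 2 * b ^ 1 * w) I t := by
    exact (h1.pow 2).add (h2.pow 2)
  have hsq : HasDerivWithinAt (fun t => Real.sqrt ((q t).1 ^ 2 + (q t).2 ^ 2))
      (1 / (2 * r) * (2 * a ^ 1 * u + 2 * b ^ 1 * w)) I t := by
    exact (Real.hasDerivAt_sqrt hR0.ne').comp_hasDerivWithinAt t hR
  have hnum : HasDerivWithinAt (fun t => s * (q t).1) (s * u) I t := h1.const_mul s
  have hdiv : HasDerivWithinAt (fun t => s * (q t).1 / Real.sqrt ((q t).1 ^ 2 + (q t).2 ^ 2))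
      ((s * u * r - s * a * (1 / (2 * r) * (2 * a ^ 1 * u + 2 * b ^ 1 * w))) / r ^ 2)
      I t := hnum.div hsq hr0.ne'
  have hfirst : HasDerivWithinAt
      (fun t => ((q t).1 * (v t).2 - (q t).2 * (v t).1) * (v t).2)
      ((u * w + a * (-k * b) - (w * u + b * (-k * a))) * w
        + (a * w - b * u) * (-k * b)) I t :=
    ((h1.mul h4).sub (h2.mul h3)).mul h4
  have htot := hfirst.sub hdiv
  have heq : (u * w + a * (-k * b) - (w * u + b * (-k * a))) * w
        + (a * w - b * u) * (-k * b)
      - (s * u * r - s * a * (1 / (2 * r) * (2 * a ^ 1 * u + 2 * b ^ 1 * w))) / r ^ 2 = 0 := by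
    have hr : r ≠ 0 := hr0.ne'
    rw [hk]
    field_simp
    linear_combination (-s*u) * hr2
  rw [heq] at htot
  exact htot

/-- `W` is a first integral of the Kepler billiard with any combination of focused
parabolae with the `q₁`-axis as common axis as reflection wall: it is constant along
solutions of `q'' = −s·q/‖q‖³` and invariant under elastic reflections at the focused
parabolae `{q₁ = c² − q₂²/(4c²)}` and `{q₁ = q₂²/(4c²) − c²}`. -/
theorem stmt_9 (s : ℝ) :
    (∀ I : Set ℝ, Convex ℝ I → ∀ q v : ℝ → ℝ × ℝ,
      (∀ t ∈ I, q t ≠ 0) →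
      (∀ t ∈ I, HasDerivWithinAt q (v t) I t) →
      (∀ t ∈ I, HasDerivWithinAt v
        ((-(s / Real.sqrt ((q t).1 ^ 2 + (q t).2 ^ 2) ^ 3)) • q t) I t) →
      ∀ t ∈ I, ∀ t' ∈ I, keplerW s (q t) (v t) = keplerW s (q t') (v t')) ∧
    (∀ c : ℝ, c ≠ 0 → ∀ q p : ℝ × ℝ,
      q.1 = c ^ 2 - q.2 ^ 2 / (4 * c ^ 2) →
      ∀ n p' : ℝ × ℝ, n = (1, q.2 / (2 * c ^ 2)) →
      p' = p - (2 * ((p.1 * n.1 + p.2 * n.2) / (n.1 ^ 2 + n.2 ^ 2))) • n →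
      keplerW s q p' = keplerW s q p) ∧
    (∀ c : ℝ, c ≠ 0 → ∀ q p : ℝ × ℝ,
      q.1 = q.2 ^ 2 / (4 * c ^ 2) - c ^ 2 →
      ∀ n p' : ℝ × ℝ, n = (1, -q.2 / (2 * c ^ 2)) →
      p' = p - (2 * ((p.1 * n.1 + p.2 * n.2) / (n.1 ^ 2 + n.2 ^ 2))) • n →
      keplerW s q p' = keplerW s q p) := by
  refine ⟨?_, ?_, ?_⟩
  · intro I hI q v hq0 hq hv t ht t' ht'
    have key : ∀ x ∈ I, HasFDerivWithinAt (fun t => keplerW s (q t) (v t))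
        (0 : ℝ →L[ℝ] ℝ) I x := by
      intro x hx
      have h := (keplerW_hasDeriv_zero s I q v hq0 hq hv x hx).hasFDerivWithinAt
      have e : ContinuousLinearMap.toSpanSingleton ℝ (0 : ℝ) = 0 := by
        ext; simp
      rwa [e] at h
    have := hI.norm_image_sub_le_of_norm_hasFDerivWithin_le (C := 0) key
      (fun x _ => by simp) ht' ht
    have h0 : ‖keplerW s (q t) (v t) - keplerW s (q t') (v t')‖ ≤ 0 := by
      simpa using this
    have := norm_le_zero_iff.1 h0
    linarith [sub_eq_zero.1 this]
  · intro c hc q p hq n p' hn hp'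
    subst hn
    unfold keplerW
    rw [hp']
    simp only [Prod.fst_sub, Prod.snd_sub, Prod.smul_fst, Prod.smul_snd, smul_eq_mul]
    rw [hq]
    congr 1
    field_simp
    ring
  · intro c hc q p hq n p' hn hp'
    subst hn
    unfold keplerW
    rw [hp']
    simp only [Prod.fst_sub, Prod.snd_sub, Prod.smul_fst, Prod.smul_snd, smul_eq_mul]
    rw [hq]
    congr 1
    field_simp
    ring
end

section
/- Let a, b > 0 and let S : ℝ² → ℝ², S(z₁,z₂) := (z₁² − z₂², 2z₁z₂), be the complex square map. Then the image under S of the centered ellipse {z : z₁²/a² + z₂²/b² = 1} equals the ellipse {q : (q₁ − (a²−b²)/2)²/((a²+b²)/2)² + q₂²/(ab)² = 1}, which has the origin as one of its foci. -/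
lemma sq_map_surj_aux (A c q1 q2 : ℝ) (hac : c < A) (hbc : -A < c)
    (hq : (q1 - c) ^ 2 / A ^ 2 + q2 ^ 2 / (A ^ 2 - c ^ 2) = 1) :
    ∃ x y : ℝ, x ^ 2 / (A + c) + y ^ 2 / (A - c) = 1 ∧
      x ^ 2 - y ^ 2 = q1 ∧ 2 * x * y = q2 := by
  have hA : 0 < A := by linarith
  have hApc : 0 < A + c := by linarith
  have hAmc : 0 < A - c := by linarith
  have hB : 0 < A ^ 2 - c ^ 2 := by nlinarith
  have hc2 : c ^ 2 ≤ A ^ 2 := by nlinarith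
  have hbound : (q1 - c) ^ 2 ≤ A ^ 2 := by
    have h0 : 0 ≤ q2 ^ 2 / (A ^ 2 - c ^ 2) := by positivity
    have h1 : (q1 - c) ^ 2 / A ^ 2 ≤ 1 := by linarith
    exact (div_le_one (by positivity)).mp h1
  set E : ℝ := (A ^ 2 + c * (q1 - c)) / A with hEdef
  have hnum : 0 ≤ A ^ 2 + c * (q1 - c) := by
    nlinarith [mul_le_mul hc2 hbound (sq_nonneg _) (sq_nonneg A),
      sq_nonneg (c * (q1 - c) + A ^ 2)]
  have hEnn : 0 ≤ E := div_nonneg hnum hA.le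
  have hE : q1 ^ 2 + q2 ^ 2 = E ^ 2 := by
    rw [hEdef, div_pow, eq_div_iff (by positivity)]
    field_simp at hq
    linear_combination hq
  set r : ℝ := Real.sqrt (q1 ^ 2 + q2 ^ 2) with hrdef
  have hr : r = E := by rw [hrdef, hE, Real.sqrt_sq hEnn]
  have hr2 : r ^ 2 = q1 ^ 2 + q2 ^ 2 := Real.sq_sqrt (by positivity)
  have hrq : |q1| ≤ r := by
    rw [hrdef]
    calc |q1| = Real.sqrt (q1 ^ 2) := (Real.sqrt_sq_eq_abs q1).symm
    _ ≤ _ := Real.sqrt_le_sqrt (by nlinarith [sq_nonneg q2])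
  have hrq1 : 0 ≤ (r + q1) / 2 := by have := abs_le.mp hrq; linarith
  have hrq2 : 0 ≤ (r - q1) / 2 := by have := abs_le.mp hrq; linarith
  obtain ⟨s, hs2, hsq⟩ : ∃ s : ℝ, s ^ 2 = 1 ∧ s * |q2| = q2 := by
    rcases le_or_gt 0 q2 with h | h
    · exact ⟨1, by norm_num, by rw [abs_of_nonneg h]; ring⟩
    · exact ⟨-1, by norm_num, by rw [abs_of_neg h]; ring⟩
  refine ⟨Real.sqrt ((r + q1) / 2), s * Real.sqrt ((r - q1) / 2), ?_, ?_, ?_⟩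
  · have hx2 : Real.sqrt ((r + q1) / 2) ^ 2 = (r + q1) / 2 := Real.sq_sqrt hrq1
    have hy2 : (s * Real.sqrt ((r - q1) / 2)) ^ 2 = (r - q1) / 2 := by
      rw [mul_pow, Real.sq_sqrt hrq2, hs2, one_mul]
    rw [hx2, hy2, hr, hEdef]
    field_simp
    ring
  · have hx2 : Real.sqrt ((r + q1) / 2) ^ 2 = (r + q1) / 2 := Real.sq_sqrt hrq1
    have hy2 : (s * Real.sqrt ((r - q1) / 2)) ^ 2 = (r - q1) / 2 := by
      rw [mul_pow, Real.sq_sqrt hrq2, hs2, one_mul]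
    rw [hx2, hy2]; ring
  · have hprod : ((r + q1) / 2) * ((r - q1) / 2) = (q2 / 2) ^ 2 := by
      nlinarith [hr2]
    have hkey : Real.sqrt ((r + q1) / 2) * Real.sqrt ((r - q1) / 2) = |q2 / 2| := by
      rw [← Real.sqrt_mul hrq1, hprod, Real.sqrt_sq_eq_abs]
    rw [show 2 * Real.sqrt ((r + q1) / 2) * (s * Real.sqrt ((r - q1) / 2))
        = 2 * s * (Real.sqrt ((r + q1) / 2) * Real.sqrt ((r - q1) / 2)) by ring, hkey,
      abs_div, abs_two]
    rw [show 2 * s * (|q2| / 2) = s * |q2| by ring, hsq]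

/-- The complex square map `S(z₁,z₂) = (z₁² − z₂², 2z₁z₂)` maps the centered ellipse
`{z₁²/a² + z₂²/b² = 1}` onto the ellipse
`{(q₁ − (a²−b²)/2)²/((a²+b²)/2)² + q₂²/(ab)² = 1}`, which has the origin as one of its
foci: its points q satisfy dist(q, 0) + dist(q, (a²−b², 0)) = a² + b². -/
theorem stmt_11 (a b : ℝ) (ha : 0 < a) (hb : 0 < b) (S : ℝ × ℝ → ℝ × ℝ)
    (hS : S = fun z => (z.1 ^ 2 - z.2 ^ 2, 2 * z.1 * z.2)) :
    S '' {z : ℝ × ℝ | z.1 ^ 2 / a ^ 2 + z.2 ^ 2 / b ^ 2 = 1} =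
      {q : ℝ × ℝ |
        (q.1 - (a ^ 2 - b ^ 2) / 2) ^ 2 / ((a ^ 2 + b ^ 2) / 2) ^ 2
          + q.2 ^ 2 / (a * b) ^ 2 = 1} ∧
    ∀ q ∈ S '' {z : ℝ × ℝ | z.1 ^ 2 / a ^ 2 + z.2 ^ 2 / b ^ 2 = 1},
      Real.sqrt (q.1 ^ 2 + q.2 ^ 2)
        + Real.sqrt ((q.1 - (a ^ 2 - b ^ 2)) ^ 2 + q.2 ^ 2) = a ^ 2 + b ^ 2 := by
  subst hS
  have ha' := ha.ne'
  have hb' := hb.ne'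
  constructor
  · ext ⟨q1, q2⟩
    simp only [Set.mem_image, Set.mem_setOf_eq, Prod.mk.injEq]
    constructor
    · rintro ⟨⟨x, y⟩, hz, h1, h2⟩
      simp only at hz h1 h2
      subst h1; subst h2
      field_simp at hz ⊢
      linear_combination (2 * ((a ^ 2 + b ^ 2) * (x ^ 2 + y ^ 2)
        + (a ^ 2 - b ^ 2) * (x ^ 2 - y ^ 2) + 2 * a ^ 2 * b ^ 2)) * hz
    · intro hq
      obtain ⟨x, y, h1, h2, h3⟩ := sq_map_surj_aux ((a ^ 2 + b ^ 2) / 2)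
        ((a ^ 2 - b ^ 2) / 2) q1 q2 (by nlinarith) (by nlinarith)
        (by rw [show ((a ^ 2 + b ^ 2) / 2) ^ 2 - ((a ^ 2 - b ^ 2) / 2) ^ 2
              = (a * b) ^ 2 by ring]; exact hq)
      refine ⟨⟨x, y⟩, ?_, h2, h3⟩
      simp only [Set.mem_setOf_eq]
      rw [show (a ^ 2 + b ^ 2) / 2 + (a ^ 2 - b ^ 2) / 2 = (a : ℝ) ^ 2 by ring,
        show (a ^ 2 + b ^ 2) / 2 - (a ^ 2 - b ^ 2) / 2 = (b : ℝ) ^ 2 by ring] at h1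
      exact h1
  · rintro q ⟨⟨x, y⟩, hz, rfl⟩
    simp only [Set.mem_setOf_eq] at hz
    simp only
    field_simp at hz
    have hx2 : x ^ 2 ≤ a ^ 2 := by nlinarith [mul_pos hb hb, mul_nonneg (sq_nonneg y) (sq_nonneg a)]
    have hy2 : y ^ 2 ≤ b ^ 2 := by nlinarith [mul_pos ha ha, mul_nonneg (sq_nonneg x) (sq_nonneg b)]
    have h1 : (x ^ 2 - y ^ 2) ^ 2 + (2 * x * y) ^ 2 = (x ^ 2 + y ^ 2) ^ 2 := by ring
    have h2 : (x ^ 2 - y ^ 2 - (a ^ 2 - b ^ 2)) ^ 2 + (2 * x * y) ^ 2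
        = (a ^ 2 + b ^ 2 - (x ^ 2 + y ^ 2)) ^ 2 := by
      linear_combination (4 : ℝ) * hz
    rw [h1, h2, Real.sqrt_sq (by positivity), Real.sqrt_sq (by nlinarith)]
    ring
end

section
/- Let a, b > 0 with a ≠ b and let S : ℝ² → ℝ², S(z₁,z₂) := (z₁² − z₂², 2z₁z₂), be the complex square map. Then the image under S of the union of the two confocal centered hyperbolae {z : z₁²/a² − z₂²/b² = 1} and {z : z₁²/b² − z₂²/a² = 1} equals the full hyperbola {q : (q₁ − (a²+b²)/2)²/((a²−b²)/2)² − q₂²/(ab)² = 1}, which has the origin as one of its foci; each of the two centered hyperbolae is mapped onto one branch of this focused hyperbola. -/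
private lemma sq12_sqrt (u v : ℝ) : ∃ x y : ℝ, x^2 - y^2 = u ∧ 2*x*y = v := by
  obtain ⟨z, hz⟩ := IsAlgClosed.exists_pow_nat_eq (⟨u, v⟩ : ℂ) zero_lt_two
  refine ⟨z.re, z.im, ?_, ?_⟩
  · have := congrArg Complex.re hz
    simpa [pow_two, Complex.mul_re, sq] using this
  · have := congrArg Complex.im hz
    simp [pow_two, Complex.mul_im] at this
    linarith

private lemma sq12_branch1 (a b x y : ℝ) (ha : 0 < a) (hb : 0 < b) (hab : a^2 - b^2 ≠ 0)
    (h : x^2/a^2 - y^2/b^2 = 1) :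
    ((x^2-y^2) - (a^2+b^2)/2)^2/((a^2-b^2)/2)^2 - (2*x*y)^2/(a*b)^2 = 1 ∧
    0 < (a^2-b^2) * ((x^2-y^2) - (a^2+b^2)/2) := by
  have ha' : a ≠ 0 := ha.ne'
  have hb' : b ≠ 0 := hb.ne'
  have h' : b^2*x^2 - a^2*y^2 = a^2*b^2 := by
    field_simp at h; linarith
  have hA2 : (0:ℝ) < (a^2-b^2)^2 := by positivity
  constructor
  · field_simp
    linear_combination 4*(a^2*x^2 - b^2*y^2 - a^2*b^2) * h'
  · have key : (a^2-b^2) * ((x^2-y^2) - (a^2+b^2)/2) * (2*b^2) =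
        (a^2-b^2)^2*(2*y^2+b^2) := by linear_combination 2*(a^2-b^2)*h'
    nlinarith [mul_pos hA2 (by positivity : (0:ℝ) < 2*y^2+b^2), mul_pos hb hb]

private lemma sq12_branch2 (a b x y : ℝ) (ha : 0 < a) (hb : 0 < b) (hab : a^2 - b^2 ≠ 0)
    (h : x^2/b^2 - y^2/a^2 = 1) :
    ((x^2-y^2) - (a^2+b^2)/2)^2/((a^2-b^2)/2)^2 - (2*x*y)^2/(a*b)^2 = 1 ∧
    (a^2-b^2) * ((x^2-y^2) - (a^2+b^2)/2) < 0 := by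
  have ha' : a ≠ 0 := ha.ne'
  have hb' : b ≠ 0 := hb.ne'
  have h' : a^2*x^2 - b^2*y^2 = a^2*b^2 := by
    field_simp at h; linarith
  have hA2 : (0:ℝ) < (a^2-b^2)^2 := by positivity
  constructor
  · field_simp
    linear_combination 4*(b^2*x^2 - a^2*y^2 - a^2*b^2) * h'
  · have key : (a^2-b^2) * ((x^2-y^2) - (a^2+b^2)/2) * (2*a^2) =
        -((a^2-b^2)^2*(2*y^2+a^2)) := by linear_combination 2*(a^2-b^2)*h'
    nlinarith [mul_pos hA2 (by positivity : (0:ℝ) < 2*y^2+a^2), mul_pos ha ha]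

private lemma sq12_rev (a b x y : ℝ) (ha : 0 < a) (hb : 0 < b) (hab : a^2 - b^2 ≠ 0)
    (h : ((x^2-y^2) - (a^2+b^2)/2)^2/((a^2-b^2)/2)^2 - (2*x*y)^2/(a*b)^2 = 1) :
    x^2/a^2 - y^2/b^2 = 1 ∨ x^2/b^2 - y^2/a^2 = 1 := by
  have ha' : a ≠ 0 := ha.ne'
  have hb' : b ≠ 0 := hb.ne'
  have h' : (b^2*x^2 - a^2*y^2 - a^2*b^2) * (a^2*x^2 - b^2*y^2 - a^2*b^2) = 0 := by
    field_simp at h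
    linear_combination h / 4
  rcases mul_eq_zero.1 h' with h1 | h1
  · left; field_simp; linarith
  · right; field_simp; linarith

private lemma sq12_abs (s A : ℝ) (h : A^2 ≤ s^2) : |(|s+A| - |s-A|)| = 2*|A| := by
  have hm : |s+A| * |s-A| = s^2 - A^2 := by
    rw [← abs_mul, show (s+A)*(s-A) = s^2 - A^2 by ring, abs_of_nonneg (by linarith)]
  have e1 : |s+A|^2 = (s+A)^2 := sq_abs _
  have e2 : |s-A|^2 = (s-A)^2 := sq_abs _
  have key : (|s+A| - |s-A|)^2 = (2*A)^2 := by linear_combination e1 + e2 - 2*hm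
  have := congrArg Real.sqrt key
  rwa [Real.sqrt_sq_eq_abs, Real.sqrt_sq_eq_abs, abs_mul, abs_two] at this

private lemma sq12_focal (a b u v : ℝ) (ha : 0 < a) (hb : 0 < b) (hab : a^2 - b^2 ≠ 0)
    (h : (u - (a^2+b^2)/2)^2/((a^2-b^2)/2)^2 - v^2/(a*b)^2 = 1) :
    |Real.sqrt (u^2+v^2) - Real.sqrt ((u-(a^2+b^2))^2+v^2)| = |a^2-b^2| := by
  have ha' : a ≠ 0 := ha.ne'
  have hb' : b ≠ 0 := hb.ne'
  have h' : (2*u-(a^2+b^2))^2*(a*b)^2 - (a^2-b^2)^2*v^2 = (a^2-b^2)^2*(a*b)^2 := by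
    field_simp at h; linear_combination h
  have h1 : u^2+v^2 =
      ((a^2+b^2)*(2*u-(a^2+b^2)) / (2*(a^2-b^2)) + (a^2-b^2)/2)^2 := by
    field_simp
    linear_combination (-4) * h'
  have h2 : (u-(a^2+b^2))^2+v^2 =
      ((a^2+b^2)*(2*u-(a^2+b^2)) / (2*(a^2-b^2)) - (a^2-b^2)/2)^2 := by
    field_simp
    linear_combination (-4) * h'
  have hu : (a^2-b^2)^2 ≤ (2*u-(a^2+b^2))^2 := by
    nlinarith [sq_nonneg v, sq_nonneg (a*b), mul_pos ha hb, sq_nonneg (a^2-b^2),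
      mul_pos (mul_pos ha hb) (mul_pos ha hb)]
  set s : ℝ := (a^2+b^2)*(2*u-(a^2+b^2)) / (2*(a^2-b^2)) with hs
  have hW2 : (0:ℝ) < (a^2-b^2)^2 := by positivity
  have hss : ((a^2-b^2)/2)^2 ≤ s^2 := by
    have hsq : s^2 * (4*(a^2-b^2)^2) = (a^2+b^2)^2*(2*u-(a^2+b^2))^2 := by
      rw [hs]; field_simp; ring
    nlinarith [sq_nonneg (a*b), mul_pos ha hb, hu, sq_nonneg (2*u-(a^2+b^2)),
      sq_nonneg (a^2+b^2)]
  rw [h1, h2, Real.sqrt_sq_eq_abs, Real.sqrt_sq_eq_abs]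
  rw [sq12_abs s ((a^2-b^2)/2) hss, abs_div, abs_two]
  ring

/-- The complex square map `S(z₁,z₂) = (z₁² − z₂², 2z₁z₂)` maps the union of the two
confocal centered hyperbolae `{z₁²/a² − z₂²/b² = 1}` and `{z₁²/b² − z₂²/a² = 1}`
onto the full hyperbola `{(q₁ − (a²+b²)/2)²/((a²−b²)/2)² − q₂²/(ab)² = 1}`, each
centered hyperbola being mapped onto one branch of it; the image hyperbola has
the origin as one of its foci: its points satisfy
`|dist(q,0) − dist(q,(a²+b², 0))| = |a² − b²|`. -/
theorem stmt_12 (a b : ℝ) (ha : 0 < a) (hb : 0 < b) (hab : a ≠ b)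
    (S : ℝ × ℝ → ℝ × ℝ)
    (hS : S = fun z => (z.1 ^ 2 - z.2 ^ 2, 2 * z.1 * z.2))
    (Hfoc : Set (ℝ × ℝ))
    (hHfoc : Hfoc = {q : ℝ × ℝ |
      (q.1 - (a ^ 2 + b ^ 2) / 2) ^ 2 / ((a ^ 2 - b ^ 2) / 2) ^ 2
        - q.2 ^ 2 / (a * b) ^ 2 = 1}) :
    S '' ({z : ℝ × ℝ | z.1 ^ 2 / a ^ 2 - z.2 ^ 2 / b ^ 2 = 1}
        ∪ {z : ℝ × ℝ | z.1 ^ 2 / b ^ 2 - z.2 ^ 2 / a ^ 2 = 1}) = Hfoc ∧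
    S '' {z : ℝ × ℝ | z.1 ^ 2 / a ^ 2 - z.2 ^ 2 / b ^ 2 = 1} =
      {q ∈ Hfoc | 0 < (a ^ 2 - b ^ 2) * (q.1 - (a ^ 2 + b ^ 2) / 2)} ∧
    S '' {z : ℝ × ℝ | z.1 ^ 2 / b ^ 2 - z.2 ^ 2 / a ^ 2 = 1} =
      {q ∈ Hfoc | (a ^ 2 - b ^ 2) * (q.1 - (a ^ 2 + b ^ 2) / 2) < 0} ∧
    ∀ q ∈ Hfoc,
      |Real.sqrt (q.1 ^ 2 + q.2 ^ 2)
        - Real.sqrt ((q.1 - (a ^ 2 + b ^ 2)) ^ 2 + q.2 ^ 2)| = |a ^ 2 - b ^ 2| := by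
  subst hS hHfoc
  have hW : a^2 - b^2 ≠ 0 := by
    intro heq
    rcases lt_trichotomy a b with h'|h'|h'
    · nlinarith
    · exact hab h'
    · nlinarith
  have h2 : (fun z : ℝ × ℝ => (z.1 ^ 2 - z.2 ^ 2, 2 * z.1 * z.2)) ''
      {z : ℝ × ℝ | z.1 ^ 2 / a ^ 2 - z.2 ^ 2 / b ^ 2 = 1} =
      {q ∈ {q : ℝ × ℝ | (q.1 - (a ^ 2 + b ^ 2) / 2) ^ 2 / ((a ^ 2 - b ^ 2) / 2) ^ 2
        - q.2 ^ 2 / (a * b) ^ 2 = 1} |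
        0 < (a ^ 2 - b ^ 2) * (q.1 - (a ^ 2 + b ^ 2) / 2)} := by
    ext q
    simp only [Set.mem_image, Set.mem_setOf_eq, Set.mem_sep_iff]
    constructor
    · rintro ⟨z, hz, rfl⟩
      exact sq12_branch1 a b z.1 z.2 ha hb hW hz
    · rintro ⟨hq, hsign⟩
      obtain ⟨x, y, hu, hv⟩ := sq12_sqrt q.1 q.2
      have hq' : ((x^2-y^2) - (a^2+b^2)/2)^2/((a^2-b^2)/2)^2 - (2*x*y)^2/(a*b)^2 = 1 := by
        rw [hu, hv]; exact hq
      rcases sq12_rev a b x y ha hb hW hq' with h1 | h1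
      · exact ⟨(x, y), h1, Prod.ext hu hv⟩
      · exfalso
        have := (sq12_branch2 a b x y ha hb hW h1).2
        rw [hu] at this
        linarith
  have h3 : (fun z : ℝ × ℝ => (z.1 ^ 2 - z.2 ^ 2, 2 * z.1 * z.2)) ''
      {z : ℝ × ℝ | z.1 ^ 2 / b ^ 2 - z.2 ^ 2 / a ^ 2 = 1} =
      {q ∈ {q : ℝ × ℝ | (q.1 - (a ^ 2 + b ^ 2) / 2) ^ 2 / ((a ^ 2 - b ^ 2) / 2) ^ 2
        - q.2 ^ 2 / (a * b) ^ 2 = 1} |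
        (a ^ 2 - b ^ 2) * (q.1 - (a ^ 2 + b ^ 2) / 2) < 0} := by
    ext q
    simp only [Set.mem_image, Set.mem_setOf_eq, Set.mem_sep_iff]
    constructor
    · rintro ⟨z, hz, rfl⟩
      exact sq12_branch2 a b z.1 z.2 ha hb hW hz
    · rintro ⟨hq, hsign⟩
      obtain ⟨x, y, hu, hv⟩ := sq12_sqrt q.1 q.2
      have hq' : ((x^2-y^2) - (a^2+b^2)/2)^2/((a^2-b^2)/2)^2 - (2*x*y)^2/(a*b)^2 = 1 := by
        rw [hu, hv]; exact hq
      rcases sq12_rev a b x y ha hb hW hq' with h1 | h1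
      · exfalso
        have := (sq12_branch1 a b x y ha hb hW h1).2
        rw [hu] at this
        linarith
      · exact ⟨(x, y), h1, Prod.ext hu hv⟩
  refine ⟨?_, h2, h3, ?_⟩
  · rw [Set.image_union, h2, h3]
    ext q
    simp only [Set.mem_union, Set.mem_sep_iff, Set.mem_setOf_eq]
    constructor
    · rintro (⟨hq, _⟩ | ⟨hq, _⟩) <;> exact hq
    · intro hq
      have hc : q.1 - (a^2+b^2)/2 ≠ 0 := by
        intro h0
        rw [h0] at hq
        have hnn : 0 ≤ q.2^2/(a*b)^2 := by positivity
        simp only [ne_eq, OfNat.ofNat_ne_zero, not_false_eq_true, zero_pow, zero_div,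
          zero_sub] at hq
        linarith
      rcases (mul_ne_zero hW hc).lt_or_gt with h' | h'
      · exact Or.inr ⟨hq, h'⟩
      · exact Or.inl ⟨hq, h'⟩
  · intro q hq
    exact sq12_focal a b q.1 q.2 ha hb hW hq
end

section
/- Let a, b > 0, let ε ∈ {1, −1}, and define f(x) := x₁²/a² + ε·x₂²/b² on ℝ². (a) If x and x' both satisfy f(x) = f(x') = 1, then ⟨x − x', ∇f(x) + ∇f(x')⟩ = 0. (b) Consequently, if x ≠ x' are two points with f(x) = f(x') = 1, ∇f(x') ≠ 0, v := x' − x, and v' := v − 2(⟨v, ∇f(x')⟩/‖∇f(x')‖²)·∇f(x') is the elastic reflection of v at the conic {f = 1} at x', then ⟨v, ∇f(x)⟩ = ⟨v', ∇f(x')⟩; i.e., the Joachimsthal quantity −(1/2)⟨v, ∇f(x)⟩ is preserved from one reflection of the free billiard in the conic {f = 1} to the next. -/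
set_option maxHeartbeats 1000000


/-- For the conic `f(x) = x₁²/a² + ε·x₂²/b² = 1` (ε = ±1), with gradient
`∇f(x) = (2x₁/a², 2ε·x₂/b²)`:
(a) any two points `x, x'` on the conic satisfy `⟨x − x', ∇f(x) + ∇f(x')⟩ = 0`;
(b) consequently, if `v = x' − x` is the chord direction and `v'` is its elastic
reflection at the conic at `x'`, then `⟨v, ∇f(x)⟩ = ⟨v', ∇f(x')⟩`, i.e. the
Joachimsthal quantity `−(1/2)⟨v, ∇f(x)⟩` of the free billiard in the conic is
preserved from one reflection to the next. -/
theorem stmt_14 (a b ε : ℝ) (ha : 0 < a) (hb : 0 < b) (hε : ε = 1 ∨ ε = -1)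
    (gradf : ℝ × ℝ → ℝ × ℝ)
    (hgradf : gradf = fun x => (2 * x.1 / a ^ 2, 2 * ε * x.2 / b ^ 2)) :
    (∀ x x' : ℝ × ℝ,
      x.1 ^ 2 / a ^ 2 + ε * x.2 ^ 2 / b ^ 2 = 1 →
      x'.1 ^ 2 / a ^ 2 + ε * x'.2 ^ 2 / b ^ 2 = 1 →
      (x.1 - x'.1) * ((gradf x).1 + (gradf x').1)
        + (x.2 - x'.2) * ((gradf x).2 + (gradf x').2) = 0) ∧
    (∀ x x' : ℝ × ℝ, x ≠ x' →
      x.1 ^ 2 / a ^ 2 + ε * x.2 ^ 2 / b ^ 2 = 1 →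
      x'.1 ^ 2 / a ^ 2 + ε * x'.2 ^ 2 / b ^ 2 = 1 →
      gradf x' ≠ 0 →
      ∀ v v' : ℝ × ℝ, v = x' - x →
      v' = v - (2 * ((v.1 * (gradf x').1 + v.2 * (gradf x').2) /
              ((gradf x').1 ^ 2 + (gradf x').2 ^ 2))) • gradf x' →
      v.1 * (gradf x).1 + v.2 * (gradf x).2
        = v'.1 * (gradf x').1 + v'.2 * (gradf x').2) := by

  subst hgradf
  have ha2 : (a:ℝ)^2 ≠ 0 := by positivity
  have hb2 : (b:ℝ)^2 ≠ 0 := by positivity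
  have key : ∀ x x' : ℝ × ℝ,
      x.1 ^ 2 / a ^ 2 + ε * x.2 ^ 2 / b ^ 2 = 1 →
      x'.1 ^ 2 / a ^ 2 + ε * x'.2 ^ 2 / b ^ 2 = 1 →
      (x.1 - x'.1) * (2 * x.1 / a ^ 2 + 2 * x'.1 / a ^ 2)
        + (x.2 - x'.2) * (2 * ε * x.2 / b ^ 2 + 2 * ε * x'.2 / b ^ 2) = 0 := by
    intro x x' h h'
    have expand : (x.1 - x'.1) * (2 * x.1 / a ^ 2 + 2 * x'.1 / a ^ 2)
        + (x.2 - x'.2) * (2 * ε * x.2 / b ^ 2 + 2 * ε * x'.2 / b ^ 2)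
        = 2 * ((x.1 ^ 2 / a ^ 2 + ε * x.2 ^ 2 / b ^ 2)
            - (x'.1 ^ 2 / a ^ 2 + ε * x'.2 ^ 2 / b ^ 2)) := by
      field_simp
      ring
    rw [expand, h, h']
    ring
  refine ⟨fun x x' h h' => key x x' h h', ?_⟩
  intro x x' hne h h' hg v v' hv hv'
  set g1 := 2 * x'.1 / a ^ 2 with hg1
  set g2 := 2 * ε * x'.2 / b ^ 2 with hg2
  have hnorm : g1 ^ 2 + g2 ^ 2 ≠ 0 := by
    intro h0
    apply hg
    have h1 : g1 = 0 := by nlinarith [sq_nonneg g1, sq_nonneg g2]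
    have h2 : g2 = 0 := by nlinarith [sq_nonneg g1, sq_nonneg g2]
    simp only [Prod.ext_iff]
    exact ⟨h1, h2⟩
  have hv'1 : v'.1 = v.1 - 2 * ((v.1 * g1 + v.2 * g2) / (g1 ^ 2 + g2 ^ 2)) * g1 := by
    rw [hv']; simp [Prod.smul_def]; rfl
  have hv'2 : v'.2 = v.2 - 2 * ((v.1 * g1 + v.2 * g2) / (g1 ^ 2 + g2 ^ 2)) * g2 := by
    rw [hv']; simp [Prod.smul_def]; rfl
  have hrefl : v'.1 * g1 + v'.2 * g2 = -(v.1 * g1 + v.2 * g2) := by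
    rw [hv'1, hv'2]
    field_simp
    ring
  have ha' := key x x' h h'
  have hv1 : v.1 = x'.1 - x.1 := by rw [hv]; rfl
  have hv2 : v.2 = x'.2 - x.2 := by rw [hv]; rfl
  rw [hrefl, hv1, hv2]
  linear_combination -ha'
end
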